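/- arXiv:2306.16365 — 6 statements merged into one kernel-verified Lean document; each statement's English description precedes it below -/
import Mathlib

section
/- For all integers t ≥ 2 and k ≥ 2, the number ‖A_t‖₁ of 1-entries of the matrix A_t satisfies (1 − 1/(k−1)) · n · k^t ≤ ‖A_t‖₁ ≤ n · k^t, where n = k^{t²k} is the dimension of A_t. -/
/-- `⟨j_1,…,j_m⟩ = 1 + Σ_{i=1}^m (j_i−1)·k^{m−i}`, the injection `[k]^m → [k^m]`. -/
def ang (k : ℕ) (l : List ℕ) : ℕ := l.foldl (fun acc j => acc * k + (j - 1)) 0 + 1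

/-- The vector `v[j_1,…,j_t]`, given by a function `js : ℕ → ℕ` with `js r` being `j_{r+1}`.
Coordinates are flattened: flat coordinate `i` is coordinate `i % k` (0-indexed) of
block `i / k` (0-indexed).  It is 0 everywhere except at coordinate `j_r` (1-indexed) of
block `r` (1-indexed), where it equals `⟨j_1,…,j_{r−1}⟩`. -/
def vVec (k : ℕ) (js : ℕ → ℕ) (i : ℕ) : ℤ :=
  if i % k + 1 = js (i / k) then (ang k ((List.range (i / k)).map js) : ℤ) else 0

/-- Membership in `I = {1,…,k^t}^{tk}`. -/
def memI (t k : ℕ) (a : Fin (t * k) → ℕ) : Prop := ∀ i, 1 ≤ a i ∧ a i ≤ k ^ t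

/-- Lexicographic (strict) order on tuples. -/
def lexLt {N : ℕ} (a b : Fin N → ℕ) : Prop :=
  ∃ i : Fin N, (∀ j, j < i → a j = b j) ∧ a i < b i

/-- `js` codes an element `(j_1,…,j_t) ∈ [k]^t`. -/
def validJs (t k : ℕ) (js : ℕ → ℕ) : Prop := ∀ r, r < t → 1 ≤ js r ∧ js r ≤ k

/-- The entry `A_t(a,b)` is 1 iff `b − a ∈ S`, i.e. `b − a = v[j_1,…,j_t]` for some
`(j_1,…,j_t) ∈ [k]^t`. -/
def AtOne (t k : ℕ) (a b : Fin (t * k) → ℕ) : Prop :=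
  ∃ js : ℕ → ℕ, validJs t k js ∧
    ∀ i : Fin (t * k), (b i : ℤ) - (a i : ℤ) = vVec k js i.val

/-- `typeOf a b` is the (1-indexed) first block where `a` and `b` differ. -/
noncomputable def typeOf (t k : ℕ) (a b : Fin (t * k) → ℕ) : ℕ :=
  sInf {r | ∃ i : Fin (t * k), i.val / k + 1 = r ∧ a i ≠ b i}


lemma ang_pos (k : ℕ) (l : List ℕ) : 1 ≤ ang k l := Nat.le_add_left 1 _

lemma foldl_le (k : ℕ) : ∀ (l : List ℕ) (c : ℕ), (∀ j ∈ l, 1 ≤ j ∧ j ≤ k) →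
    l.foldl (fun acc j => acc * k + (j - 1)) c + 1 ≤ (c + 1) * k ^ l.length := by
  intro l
  induction l with
  | nil => intro c _; simp
  | cons j l ih =>
    intro c h
    have hj := h j List.mem_cons_self
    have h' : ∀ x ∈ l, 1 ≤ x ∧ x ≤ k := fun x hx => h x (List.mem_cons_of_mem _ hx)
    simp only [List.foldl_cons, List.length_cons]
    calc List.foldl (fun acc j => acc * k + (j - 1)) (c * k + (j - 1)) l + 1
        ≤ (c * k + (j - 1) + 1) * k ^ l.length := ih _ h'
      _ ≤ ((c + 1) * k) * k ^ l.length := by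
          have : c * k + (j - 1) + 1 ≤ (c + 1) * k := by
            have h1 := hj.1; have h2 := hj.2
            nlinarith [Nat.sub_add_cancel h1]
          exact Nat.mul_le_mul_right _ this
      _ = (c + 1) * k ^ (l.length + 1) := by ring

lemma ang_le (k : ℕ) (l : List ℕ) (h : ∀ j ∈ l, 1 ≤ j ∧ j ≤ k) :
    ang k l ≤ k ^ l.length := by
  have := foldl_le k l 0 h
  simpa [ang] using this

lemma vVec_nonneg (k : ℕ) (js : ℕ → ℕ) (i : ℕ) : 0 ≤ vVec k js i := by
  unfold vVec; split <;> positivity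

lemma vVec_congr (k : ℕ) (js js' : ℕ → ℕ) (i : ℕ)
    (h : ∀ r, r ≤ i / k → js r = js' r) : vVec k js i = vVec k js' i := by
  unfold vVec
  rw [h (i / k) le_rfl, List.map_congr_left (fun r hr => h r (le_of_lt (List.mem_range.mp hr)))]

lemma vVec_recover (k : ℕ) (hk : 1 ≤ k) (js js' : ℕ → ℕ) (r : ℕ)
    (h1 : 1 ≤ js r) (h2 : js r ≤ k)
    (heq : vVec k js (r * k + (js r - 1)) = vVec k js' (r * k + (js r - 1))) :
    js' r = js r := by
  have hm : js r - 1 < k := by omega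
  have hdiv : (r * k + (js r - 1)) / k = r := by
    rw [mul_comm, Nat.mul_add_div (by omega), Nat.div_eq_of_lt hm]; omega
  have hmod : (r * k + (js r - 1)) % k = js r - 1 := by
    rw [mul_comm, Nat.mul_add_mod, Nat.mod_eq_of_lt hm]
  unfold vVec at heq
  rw [hdiv, hmod] at heq
  have hcond : js r - 1 + 1 = js r := by omega
  rw [hcond] at heq
  simp only [if_pos rfl] at heq
  by_cases hc : js r = js' r
  · omega
  · rw [if_neg hc] at heq
    exfalso
    have h3 := ang_pos k ((List.range r).map js)
    have : (ang k ((List.range r).map js) : ℤ) = 0 := by simpa using heq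
    omega

def extJ (t : ℕ) (f : Fin t → ℕ) : ℕ → ℕ := fun r => if h : r < t then f ⟨r, h⟩ else 1

def IFin (t k : ℕ) : Finset (Fin (t * k) → ℕ) :=
  Fintype.piFinset fun _ => Finset.Icc 1 (k ^ t)

open Classical in
noncomputable def JFin (t k : ℕ) : Finset (ℕ → ℕ) :=
  (Fintype.piFinset fun _ : Fin t => Finset.Icc 1 k).image (extJ t)

lemma mem_IFin (t k : ℕ) (a : Fin (t * k) → ℕ) : a ∈ IFin t k ↔ memI t k a := by
  simp [IFin, memI, Fintype.mem_piFinset, Finset.mem_Icc]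

lemma card_IFin (t k : ℕ) : (IFin t k).card = (k ^ t) ^ (t * k) := by
  simp [IFin, Fintype.card_piFinset, Nat.card_Icc]

lemma mem_JFin (t k : ℕ) (js : ℕ → ℕ) (h : js ∈ JFin t k) :
    validJs t k js ∧ ∀ r, t ≤ r → js r = 1 := by
  classical
  obtain ⟨f, hf, rfl⟩ := Finset.mem_image.mp h
  simp only [Fintype.mem_piFinset, Finset.mem_Icc] at hf
  constructor
  · intro r hr
    simp only [extJ, dif_pos hr]
    exact hf ⟨r, hr⟩
  · intro r hr
    simp [extJ, Nat.not_lt.mpr hr]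

lemma extJ_mem_JFin (t k : ℕ) (js : ℕ → ℕ) (h : validJs t k js) :
    extJ t (fun r : Fin t => js r.val) ∈ JFin t k := by
  classical
  refine Finset.mem_image.mpr ⟨fun r : Fin t => js r.val, ?_, rfl⟩
  simp only [Fintype.mem_piFinset, Finset.mem_Icc]
  exact fun r => h r.val r.isLt

lemma extJ_agree (t : ℕ) (js : ℕ → ℕ) (r : ℕ) (hr : r < t) :
    extJ t (fun r : Fin t => js r.val) r = js r := by
  simp [extJ, dif_pos hr]

lemma card_JFin (t k : ℕ) : (JFin t k).card = k ^ t := by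
  classical
  rw [JFin, Finset.card_image_of_injOn, Fintype.card_piFinset]
  · simp [Nat.card_Icc]
  · intro f _ g _ hfg
    funext r
    have := congrFun hfg r.val
    simpa [extJ, dif_pos r.isLt] using this

open Classical in
lemma card_filter_coord (N K A : ℕ) (i0 : Fin N) :
    ((Fintype.piFinset fun _ : Fin N => Finset.Icc 1 K).filter
      fun a => K < a i0 + A).card ≤ A * K ^ (N - 1) := by
  classical
  have hset : ((Fintype.piFinset fun _ : Fin N => Finset.Icc 1 K).filter
      fun a => K < a i0 + A) =
      Fintype.piFinset (fun i : Fin N =>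
        if i = i0 then (Finset.Icc 1 K).filter (fun x => K < x + A) else Finset.Icc 1 K) := by
    ext a
    simp only [Finset.mem_filter, Fintype.mem_piFinset]
    constructor
    · rintro ⟨h1, h2⟩ i
      by_cases hi : i = i0
      · subst hi; simp [Finset.mem_filter, h1 i, h2]
      · simp [hi, h1 i]
    · intro h
      constructor
      · intro i
        by_cases hi : i = i0
        · subst hi; have := h i; rw [if_pos rfl] at this; exact (Finset.mem_filter.mp this).1
        · have := h i; simpa [hi] using this
      · have := h i0; rw [if_pos rfl] at this; exact (Finset.mem_filter.mp this).2
  rw [hset, Fintype.card_piFinset]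
  rw [← Finset.mul_prod_erase Finset.univ _ (Finset.mem_univ i0)]
  have h1 : ((if i0 = i0 then (Finset.Icc 1 K).filter (fun x => K < x + A)
      else Finset.Icc 1 K)).card ≤ A := by
    rw [if_pos rfl]
    have hsub : (Finset.Icc 1 K).filter (fun x => K < x + A) ⊆ Finset.Icc (K + 1 - A) K := by
      intro x hx
      simp only [Finset.mem_filter, Finset.mem_Icc] at hx ⊢
      omega
    calc _ ≤ (Finset.Icc (K + 1 - A) K).card := Finset.card_le_card hsub
      _ = K + 1 - (K + 1 - A) := Nat.card_Icc _ _
      _ ≤ A := by omega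
  have h2 : ∏ i ∈ Finset.univ.erase i0,
      ((if i = i0 then (Finset.Icc 1 K).filter (fun x => K < x + A)
        else Finset.Icc 1 K)).card = K ^ (N - 1) := by
    rw [Finset.prod_congr rfl (fun i hi => by
      rw [if_neg (Finset.mem_erase.mp hi).1, Nat.card_Icc])]
    rw [Finset.prod_const, Finset.card_erase_of_mem (Finset.mem_univ i0)]
    simp
  rw [h2]
  exact Nat.mul_le_mul_right _ h1

/-- `(1 − 1/(k−1)) · n · k^t ≤ ‖A_t‖₁ ≤ n · k^t` where `n = k^(t²k)`. -/
theorem stmt2 (t k : ℕ) (ht : 2 ≤ t) (hk : 2 ≤ k) :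
    (1 - 1 / ((k : ℝ) - 1)) * (k : ℝ) ^ (t ^ 2 * k) * (k : ℝ) ^ t ≤
      (Set.ncard {p : (Fin (t * k) → ℕ) × (Fin (t * k) → ℕ) |
        memI t k p.1 ∧ memI t k p.2 ∧ AtOne t k p.1 p.2} : ℝ) ∧
    (Set.ncard {p : (Fin (t * k) → ℕ) × (Fin (t * k) → ℕ) |
        memI t k p.1 ∧ memI t k p.2 ∧ AtOne t k p.1 p.2} : ℝ) ≤
      (k : ℝ) ^ (t ^ 2 * k) * (k : ℝ) ^ t := by
  classical
  set K := k ^ t with hKdef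
  set P := {p : (Fin (t * k) → ℕ) × (Fin (t * k) → ℕ) |
        memI t k p.1 ∧ memI t k p.2 ∧ AtOne t k p.1 p.2} with hPdef
  set Φ : ((Fin (t * k) → ℕ) × (ℕ → ℕ)) → ((Fin (t * k) → ℕ) × (Fin (t * k) → ℕ)) :=
    fun p => (p.1, fun i => p.1 i + (vVec k p.2 i.val).toNat) with hΦdef
  have htk : 0 < t * k := by positivity
  have hdivlt : ∀ i : Fin (t * k), i.val / k < t := by
    intro i
    exact (Nat.div_lt_iff_lt_mul (by omega)).mpr i.isLt
  -- upper bound via image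
  have hPsub : P ⊆ ↑((IFin t k ×ˢ JFin t k).image Φ) := by
    rintro ⟨a, b⟩ ⟨ha, hb, js, hjs, heq⟩
    set js' := extJ t (fun r : Fin t => js r.val) with hjs'def
    have hagree : ∀ i : Fin (t * k), vVec k js i.val = vVec k js' i.val := by
      intro i
      exact vVec_congr k js js' i.val (fun r hr =>
        (extJ_agree t js r (lt_of_le_of_lt hr (hdivlt i))).symm)
    refine Finset.mem_coe.mpr (Finset.mem_image.mpr ⟨(a, js'), ?_, ?_⟩)
    · exact Finset.mem_product.mpr ⟨(mem_IFin _ _ _).mpr ha, extJ_mem_JFin t k js hjs⟩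
    · refine Prod.ext rfl ?_
      funext i
      have h1 : (b i : ℤ) - (a i : ℤ) = vVec k js i.val := heq i
      rw [hagree i] at h1
      have h3 : 0 ≤ vVec k js' i.val := vVec_nonneg _ _ _
      have : (b i : ℤ) = ((a i + (vVec k js' i.val).toNat : ℕ) : ℤ) := by
        push_cast [Int.toNat_of_nonneg h3]
        omega
      exact_mod_cast this.symm
  have hPfin : P.Finite := Set.Finite.subset (Finset.finite_toSet _) hPsub
  have hupperN : P.ncard ≤ K ^ (t * k) * k ^ t := by
    calc P.ncard ≤ ((IFin t k ×ˢ JFin t k).image Φ : Finset _).card := by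
          rw [← Set.ncard_coe_finset]
          exact Set.ncard_le_ncard hPsub (Finset.finite_toSet _)
      _ ≤ (IFin t k ×ˢ JFin t k).card := Finset.card_image_le
      _ = K ^ (t * k) * k ^ t := by
          rw [Finset.card_product, card_IFin, card_JFin]
  -- the good set
  set G := (IFin t k ×ˢ JFin t k).filter
    (fun p => ∀ i : Fin (t * k), p.1 i + (vVec k p.2 i.val).toNat ≤ K) with hGdef
  have hGmapsto : ∀ p ∈ G, Φ p ∈ P := by
    rintro ⟨a, js⟩ hp
    obtain ⟨hmem, hcond⟩ := Finset.mem_filter.mp hp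
    obtain ⟨haI, hjsJ⟩ := Finset.mem_product.mp hmem
    have ha := (mem_IFin t k a).mp haI
    have hjs := (mem_JFin t k js hjsJ).1
    refine ⟨ha, ?_, js, hjs, ?_⟩
    · intro i
      refine ⟨le_trans (ha i).1 (Nat.le_add_right _ _), hcond i⟩
    · intro i
      simp only [Φ]
      push_cast [Int.toNat_of_nonneg (vVec_nonneg k js i.val)]
      ring
  have hGinj : Set.InjOn Φ ↑G := by
    rintro ⟨a, js⟩ hp ⟨a', js'⟩ hq h
    obtain ⟨hmem, -⟩ := Finset.mem_filter.mp (Finset.mem_coe.mp hp)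
    obtain ⟨hmem', -⟩ := Finset.mem_filter.mp (Finset.mem_coe.mp hq)
    have hjsJ := (Finset.mem_product.mp hmem).2
    have hjsJ' := (Finset.mem_product.mp hmem').2
    have hjsv := (mem_JFin t k js hjsJ).1
    have hjsv' := (mem_JFin t k js' hjsJ').1
    have ha : a = a' := congrArg Prod.fst h
    subst ha
    have hsnd := congrArg Prod.snd h
    simp only [Φ] at hsnd
    have hvv : ∀ i : Fin (t * k), vVec k js i.val = vVec k js' i.val := by
      intro i
      have := congrFun hsnd i
      have h2 : (vVec k js i.val).toNat = (vVec k js' i.val).toNat := by omega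
      have h3 : ((vVec k js i.val).toNat : ℤ) = ((vVec k js' i.val).toNat : ℤ) := by
        exact_mod_cast h2
      rwa [Int.toNat_of_nonneg (vVec_nonneg k js i.val),
        Int.toNat_of_nonneg (vVec_nonneg k js' i.val)] at h3
    have hjseq : js = js' := by
      funext r
      by_cases hr : r < t
      · have h1 := (hjsv r hr).1
        have h2 := (hjsv r hr).2
        have hlt : r * k + (js r - 1) < t * k := by
          calc r * k + (js r - 1) < r * k + k := by omega
            _ = (r + 1) * k := by ring
            _ ≤ t * k := Nat.mul_le_mul_right _ hr
        have := hvv ⟨r * k + (js r - 1), hlt⟩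
        exact (vVec_recover k (by omega) js js' r h1 h2 this).symm
      · rw [(mem_JFin t k js hjsJ).2 r (by omega), (mem_JFin t k js' hjsJ').2 r (by omega)]
    rw [hjseq]
  have hlowerN : G.card ≤ P.ncard := by
    have h1 : (Φ '' ↑G).ncard = G.card := by
      rw [Set.ncard_image_of_injOn hGinj, Set.ncard_coe_finset]
    rw [← h1]
    refine Set.ncard_le_ncard ?_ hPfin
    rintro x ⟨p, hp, rfl⟩
    exact hGmapsto p (Finset.mem_coe.mp hp)
  -- bad set counting
  set Bad := (IFin t k ×ˢ JFin t k).filter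
    (fun p => ¬ ∀ i : Fin (t * k), p.1 i + (vVec k p.2 i.val).toNat ≤ K) with hBaddef
  have hsplit : G.card + Bad.card = K ^ (t * k) * k ^ t := by
    rw [hGdef, hBaddef, Finset.card_filter_add_card_filter_not,
      Finset.card_product, card_IFin, card_JFin]
  have hBadcard : Bad.card ≤ k ^ t * ((K ^ (t * k - 1)) * ∑ r ∈ Finset.range t, k ^ r) := by
    set idx : ℕ → (ℕ → ℕ) → Fin (t * k) :=
      fun r js => ⟨(r * k + (js r - 1)) % (t * k), Nat.mod_lt _ htk⟩ with hidxdef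
    set F : ℕ → Finset ((Fin (t * k) → ℕ) × (ℕ → ℕ)) := fun r =>
      (JFin t k).biUnion (fun js =>
        ((IFin t k).filter
          (fun a => K < a (idx r js) + ang k ((List.range r).map js))).image
          (fun a => (a, js))) with hFdef
    have hsubset : Bad ⊆ (Finset.range t).biUnion F := by
      rintro ⟨a, js⟩ hp
      obtain ⟨hmem, hbad⟩ := Finset.mem_filter.mp hp
      obtain ⟨haI, hjsJ⟩ := Finset.mem_product.mp hmem
      push_neg at hbad
      obtain ⟨i, hi⟩ := hbad
      simp only at hi
      have hbound := ((mem_IFin t k a).mp haI i).2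
      have hvne : i.val % k + 1 = js (i.val / k) := by
        by_contra hne
        have hz : vVec k js i.val = 0 := if_neg hne
        rw [hz] at hi
        simp only [Int.toNat_zero, add_zero] at hi
        omega
      have hval : vVec k js i.val = (ang k ((List.range (i.val / k)).map js) : ℤ) :=
        if_pos hvne
      have hr : i.val / k < t := hdivlt i
      refine Finset.mem_biUnion.mpr ⟨i.val / k, Finset.mem_range.mpr hr, ?_⟩
      refine Finset.mem_biUnion.mpr ⟨js, hjsJ, ?_⟩
      refine Finset.mem_image.mpr ⟨a, ?_, rfl⟩
      have hidx : idx (i.val / k) js = i := by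
        have h1 : js (i.val / k) - 1 = i.val % k := by omega
        apply Fin.ext
        simp only [hidxdef]
        rw [h1]
        have h2 : i.val / k * k + i.val % k = i.val := by
          rw [mul_comm]; exact Nat.div_add_mod _ _
        rw [h2, Nat.mod_eq_of_lt i.isLt]
      refine Finset.mem_filter.mpr ⟨haI, ?_⟩
      rw [hidx]
      have htn : (vVec k js i.val).toNat = ang k ((List.range (i.val / k)).map js) := by
        rw [hval]; simp
      omega
    calc Bad.card ≤ ∑ r ∈ Finset.range t, (F r).card :=
        le_trans (Finset.card_le_card hsubset) Finset.card_biUnion_le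
      _ ≤ ∑ r ∈ Finset.range t, k ^ t * (k ^ r * K ^ (t * k - 1)) := by
          refine Finset.sum_le_sum ?_
          intro r hrr
          have hr : r < t := Finset.mem_range.mp hrr
          calc (F r).card
              ≤ ∑ js ∈ JFin t k, (((IFin t k).filter
                  (fun a => K < a (idx r js) + ang k ((List.range r).map js))).image
                  (fun a => (a, js))).card := Finset.card_biUnion_le
            _ ≤ ∑ js ∈ JFin t k, k ^ r * K ^ (t * k - 1) := by
                refine Finset.sum_le_sum ?_
                intro js hjs
                have hjsv := (mem_JFin t k js hjs).1
                calc (((IFin t k).filter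
                      (fun a => K < a (idx r js) + ang k ((List.range r).map js))).image
                      (fun a => (a, js))).card
                    ≤ ((IFin t k).filter
                      (fun a => K < a (idx r js) + ang k ((List.range r).map js))).card :=
                      Finset.card_image_le
                  _ ≤ (ang k ((List.range r).map js)) * K ^ (t * k - 1) :=
                      card_filter_coord (t * k) K _ (idx r js)
                  _ ≤ k ^ r * K ^ (t * k - 1) := by
                      refine Nat.mul_le_mul_right _ ?_
                      have hent : ∀ j ∈ (List.range r).map js, 1 ≤ j ∧ j ≤ k := by
                        intro j hj
                        obtain ⟨m, hm, rfl⟩ := List.mem_map.mp hj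
                        exact hjsv m (lt_trans (List.mem_range.mp hm) hr)
                      have := ang_le k ((List.range r).map js) hent
                      simpa using this
            _ = k ^ t * (k ^ r * K ^ (t * k - 1)) := by
                rw [Finset.sum_const, card_JFin, smul_eq_mul]
      _ = k ^ t * ((K ^ (t * k - 1)) * ∑ r ∈ Finset.range t, k ^ r) := by
          rw [Finset.mul_sum, Finset.mul_sum]
          exact Finset.sum_congr rfl (fun r _ => by ring)
  -- final arithmetic
  have hk1R : (1 : ℝ) < (k : ℝ) := by exact_mod_cast hk.trans_lt' one_lt_two
  have hpos : (0 : ℝ) < (k : ℝ) - 1 := by linarith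
  have hexp : t ^ 2 * k = t * (t * k) := by ring
  have hNeq : (k : ℝ) ^ (t ^ 2 * k) = ((k : ℝ) ^ t) ^ (t * k) := by
    rw [hexp, pow_mul]
  constructor
  · -- lower bound
    have hGR : (G.card : ℝ) = ((k : ℝ) ^ t) ^ (t * k) * (k : ℝ) ^ t - (Bad.card : ℝ) := by
      have h1 : ((G.card + Bad.card : ℕ) : ℝ) = ((K ^ (t * k) * k ^ t : ℕ) : ℝ) := by
        exact_mod_cast congrArg (fun n : ℕ => (n : ℝ)) hsplit
      rw [hKdef] at h1
      push_cast at h1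
      linarith
    have hBR : (Bad.card : ℝ) ≤
        (k : ℝ) ^ t * (((k : ℝ) ^ t) ^ (t * k - 1) * ∑ r ∈ Finset.range t, (k : ℝ) ^ r) := by
      have := hBadcard
      rw [hKdef] at this
      exact_mod_cast this
    have hS : (∑ r ∈ Finset.range t, (k : ℝ) ^ r) * ((k : ℝ) - 1) = (k : ℝ) ^ t - 1 :=
      geom_sum_mul _ t
    have hM : ((k : ℝ) ^ t) ^ (t * k - 1) * (k : ℝ) ^ t = ((k : ℝ) ^ t) ^ (t * k) := by
      rw [← pow_succ]
      congr 1
      omega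
    have hMpos : (0 : ℝ) < ((k : ℝ) ^ t) ^ (t * k - 1) := by positivity
    have hBineq : (Bad.card : ℝ) * ((k : ℝ) - 1) ≤ ((k : ℝ) ^ t) ^ (t * k) * (k : ℝ) ^ t := by
      calc (Bad.card : ℝ) * ((k : ℝ) - 1)
          ≤ ((k : ℝ) ^ t * (((k : ℝ) ^ t) ^ (t * k - 1) *
              ∑ r ∈ Finset.range t, (k : ℝ) ^ r)) * ((k : ℝ) - 1) :=
            mul_le_mul_of_nonneg_right hBR (le_of_lt hpos)
        _ = (k : ℝ) ^ t * ((k : ℝ) ^ t) ^ (t * k - 1) *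
              ((∑ r ∈ Finset.range t, (k : ℝ) ^ r) * ((k : ℝ) - 1)) := by ring
        _ = (k : ℝ) ^ t * ((k : ℝ) ^ t) ^ (t * k - 1) * ((k : ℝ) ^ t - 1) := by rw [hS]
        _ ≤ (k : ℝ) ^ t * ((k : ℝ) ^ t) ^ (t * k - 1) * (k : ℝ) ^ t := by
            have hfac : (0 : ℝ) ≤ (k : ℝ) ^ t * ((k : ℝ) ^ t) ^ (t * k - 1) := by positivity
            nlinarith
        _ = ((k : ℝ) ^ t) ^ (t * k) * (k : ℝ) ^ t := by rw [← hM]; ring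
    have hBle : (Bad.card : ℝ) ≤ ((k : ℝ) ^ t) ^ (t * k) * (k : ℝ) ^ t / ((k : ℝ) - 1) := by
      rw [le_div_iff₀ hpos]
      exact hBineq
    have hncard : (G.card : ℝ) ≤ (P.ncard : ℝ) := by exact_mod_cast hlowerN
    have hexpand : (1 - 1 / ((k : ℝ) - 1)) * ((k : ℝ) ^ t) ^ (t * k) * (k : ℝ) ^ t =
        ((k : ℝ) ^ t) ^ (t * k) * (k : ℝ) ^ t -
          ((k : ℝ) ^ t) ^ (t * k) * (k : ℝ) ^ t / ((k : ℝ) - 1) := by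
      field_simp
    rw [hNeq, hexpand]
    linarith
  · -- upper bound
    have h1 : (P.ncard : ℝ) ≤ ((K ^ (t * k) * k ^ t : ℕ) : ℝ) := by exact_mod_cast hupperN
    rw [hKdef] at h1
    push_cast at h1
    rw [hNeq]
    linarith
end

section
/- Let a, b, c ∈ I with a < b lexicographically, and suppose A_t(a,c) = A_t(b,c) = 1, with c − a = v[i_1,…,i_t] and c − b = v[j_1,…,j_t]. Let r = type(a,b). Then i_q = j_q for all q < r, i_r < j_r, and the first coordinate (in the order (1,1),…,(1,k),(2,1),…,(t,k)) at which a and b differ is coordinate (r, i_r). -/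
lemma vVec_eq_of (k : ℕ) (js : ℕ → ℕ) (i : ℕ) (h : i % k + 1 = js (i / k)) :
    vVec k js i = (ang k ((List.range (i / k)).map js) : ℤ) := by
  simp [vVec, h]

lemma vVec_zero_of (k : ℕ) (js : ℕ → ℕ) (i : ℕ) (h : i % k + 1 ≠ js (i / k)) :
    vVec k js i = 0 := by
  simp [vVec, h]

lemma vVec_of_ne_zero (k : ℕ) (js : ℕ → ℕ) (i : ℕ) (h : vVec k js i ≠ 0) :
    i % k + 1 = js (i / k) := by
  by_contra hc
  exact h (vVec_zero_of k js i hc)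

lemma dm_div (k q s : ℕ) (hs : s < k) : (q * k + s) / k = q := by
  have h0 : 0 < k := by omega
  rw [add_comm, Nat.add_mul_div_right _ _ h0, Nat.div_eq_of_lt hs]
  omega

lemma dm_mod (k q s : ℕ) (hs : s < k) : (q * k + s) % k = s := by
  rw [add_comm, Nat.add_mul_mod_self_right, Nat.mod_eq_of_lt hs]

/-- If `a < b`, `A_t(a,c) = A_t(b,c) = 1` with `c − a = v[i_1,…,i_t]`,
`c − b = v[j_1,…,j_t]`, and `r = type(a,b)`, then `i_q = j_q` for `q < r`,
`i_r < j_r`, and the first coordinate where `a` and `b` differ is `(r, i_r)`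
(flat 0-indexed coordinate `(r−1)·k + (i_r − 1)`).
Here `is q` is `i_{q+1}` and `js q` is `j_{q+1}`. -/
theorem stmt4 (t k : ℕ) (ht : 2 ≤ t) (hk : 2 ≤ k)
    (a b c : Fin (t * k) → ℕ)
    (ha : memI t k a) (hb : memI t k b) (hc : memI t k c)
    (hab : lexLt a b)
    (is js : ℕ → ℕ) (his : validJs t k is) (hjs : validJs t k js)
    (hca : ∀ i : Fin (t * k), (c i : ℤ) - (a i : ℤ) = vVec k is i.val)
    (hcb : ∀ i : Fin (t * k), (c i : ℤ) - (b i : ℤ) = vVec k js i.val)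
    (r : ℕ) (hr : r = typeOf t k a b) :
    (∀ q, q + 1 < r → is q = js q) ∧
    is (r - 1) < js (r - 1) ∧
    (∀ i : Fin (t * k),
      (i.val < (r - 1) * k + (is (r - 1) - 1) → a i = b i) ∧
      (i.val = (r - 1) * k + (is (r - 1) - 1) → a i ≠ b i)) := by
  obtain ⟨i₀, hpre, hlt⟩ := hab
  have hkpos : 0 < k := by omega
  have D : ∀ i : Fin (t * k), (b i : ℤ) - (a i : ℤ) = vVec k is i.val - vVec k js i.val := by
    intro i
    have h1 := hca i
    have h2 := hcb i
    linarith
  set p := i₀.val / k with hp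
  have hpt : p < t := by
    rw [hp]
    exact (Nat.div_lt_iff_lt_mul hkpos).mpr i₀.isLt
  have hplei : p * k ≤ i₀.val := by
    rw [hp]; exact Nat.div_mul_le_self _ _
  have hrval : r = p + 1 := by
    have hmem : p + 1 ∈ {r | ∃ i : Fin (t * k), i.val / k + 1 = r ∧ a i ≠ b i} :=
      ⟨i₀, rfl, ne_of_lt hlt⟩
    obtain ⟨i', hi', hne⟩ := Nat.sInf_mem (⟨_, hmem⟩ :
      Set.Nonempty {r | ∃ i : Fin (t * k), i.val / k + 1 = r ∧ a i ≠ b i})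
    rw [hr]
    unfold typeOf
    refine le_antisymm (Nat.sInf_le hmem) ?_
    by_contra h
    push_neg at h
    have hlt' : i'.val < i₀.val := by
      by_contra hle
      have h2 : p ≤ i'.val / k := by
        rw [hp]; exact Nat.div_le_div_right (Nat.le_of_not_lt hle)
      omega
    exact hne (hpre i' (Fin.lt_def.mpr hlt'))
  -- Part 1
  have part1 : ∀ q, q + 1 < r → is q = js q := by
    intro q hq
    rw [hrval] at hq
    have hqp : q < p := by omega
    have hqt : q < t := by omega
    obtain ⟨h1, h2⟩ := his q hqt
    have hsk : is q - 1 < k := by omega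
    have hqk : q * k + (is q - 1) < (q + 1) * k := by
      rw [add_mul, one_mul]; omega
    have hpk : (q + 1) * k ≤ p * k := Nat.mul_le_mul_right k (by omega)
    have hmi0 : q * k + (is q - 1) < i₀.val := by omega
    have hmlt : q * k + (is q - 1) < t * k := lt_of_lt_of_le hqk
      (le_trans hpk (le_trans hplei (le_of_lt i₀.isLt)))
    have hdiv : (q * k + (is q - 1)) / k = q := dm_div k q _ hsk
    have hmod : (q * k + (is q - 1)) % k = is q - 1 := dm_mod k q _ hsk
    have hab' : a ⟨_, hmlt⟩ = b ⟨_, hmlt⟩ := hpre ⟨_, hmlt⟩ (Fin.lt_def.mpr hmi0)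
    have hDm := D ⟨_, hmlt⟩
    rw [hab', sub_self] at hDm
    have heq : vVec k is (q * k + (is q - 1)) = vVec k js (q * k + (is q - 1)) :=
      sub_eq_zero.mp hDm.symm
    have hisat : (q * k + (is q - 1)) % k + 1 = is ((q * k + (is q - 1)) / k) := by
      rw [hdiv, hmod]; omega
    have hpos : (0 : ℤ) < vVec k is (q * k + (is q - 1)) := by
      rw [vVec_eq_of k is _ hisat]
      exact_mod_cast ang_pos k _
    have hjsne : vVec k js (q * k + (is q - 1)) ≠ 0 := by
      rw [← heq]; exact ne_of_gt hpos
    have hfin := vVec_of_ne_zero k js _ hjsne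
    rw [hdiv, hmod] at hfin
    omega
  -- facts at i₀
  have hD0 := D i₀
  have hlt0 : (0 : ℤ) < vVec k is i₀.val - vVec k js i₀.val := by
    rw [← hD0]
    have : (a i₀ : ℤ) < (b i₀ : ℤ) := by exact_mod_cast hlt
    linarith
  have hisne : vVec k is i₀.val ≠ 0 := by
    have hnn := vVec_nonneg k js i₀.val
    intro h; rw [h] at hlt0; linarith
  have hIs : i₀.val % k + 1 = is p := by
    have h := vVec_of_ne_zero k is i₀.val hisne
    rw [← hp] at h
    exact h
  obtain ⟨hi1, hi2⟩ := his p hpt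
  obtain ⟨hj1, hj2⟩ := hjs p hpt
  have hmod0 : i₀.val % k = is p - 1 := by omega
  have hI0 : i₀.val = p * k + (is p - 1) := by
    have h := Nat.mod_add_div i₀.val k
    rw [← hp] at h
    have h2 : k * p = p * k := Nat.mul_comm k p
    omega
  -- Part 2
  have part2 : is p < js p := by
    by_contra hcon
    push_neg at hcon
    rcases Nat.lt_or_ge (js p) (is p) with hc | hc
    · -- js p < is p : the coordinate p*k + (js p - 1) lies before i₀ yet a,b differ there
      have hsk : js p - 1 < k := by omega
      have hmi0 : p * k + (js p - 1) < i₀.val := by rw [hI0]; omega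
      have hmlt : p * k + (js p - 1) < t * k := hmi0.trans i₀.isLt
      have hdiv : (p * k + (js p - 1)) / k = p := dm_div k p _ hsk
      have hmod : (p * k + (js p - 1)) % k = js p - 1 := dm_mod k p _ hsk
      have hab' : a ⟨_, hmlt⟩ = b ⟨_, hmlt⟩ := hpre ⟨_, hmlt⟩ (Fin.lt_def.mpr hmi0)
      have hDm := D ⟨_, hmlt⟩
      rw [hab', sub_self] at hDm
      have heq : vVec k is (p * k + (js p - 1)) = vVec k js (p * k + (js p - 1)) :=
        sub_eq_zero.mp hDm.symm
      have hjsat : (p * k + (js p - 1)) % k + 1 = js ((p * k + (js p - 1)) / k) := by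
        rw [hdiv, hmod]; omega
      have hpos : (0 : ℤ) < vVec k js (p * k + (js p - 1)) := by
        rw [vVec_eq_of k js _ hjsat]
        exact_mod_cast ang_pos k _
      have hisne' : vVec k is (p * k + (js p - 1)) ≠ 0 := by
        rw [heq]; exact ne_of_gt hpos
      have hfin := vVec_of_ne_zero k is _ hisne'
      rw [hdiv, hmod] at hfin
      omega
    · -- js p = is p : then vVec is i₀ = vVec js i₀, contradicting hlt0
      have hje : js p = is p := by omega
      have hisat : i₀.val % k + 1 = is (i₀.val / k) := by rw [← hp]; exact hIs
      have hjsat : i₀.val % k + 1 = js (i₀.val / k) := by rw [← hp, hje]; exact hIs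
      have hmap : (List.range (i₀.val / k)).map is = (List.range (i₀.val / k)).map js := by
        apply List.map_congr_left
        intro q hq
        rw [List.mem_range, ← hp] at hq
        exact part1 q (by rw [hrval]; omega)
      have h1 := vVec_eq_of k is i₀.val hisat
      have h2 := vVec_eq_of k js i₀.val hjsat
      rw [h1, h2, hmap] at hlt0
      simp at hlt0
  refine ⟨part1, ?_, ?_⟩
  · rw [hrval]; simpa using part2
  · intro i
    rw [hrval]
    simp only [Nat.add_sub_cancel]
    constructor
    · intro hi
      exact hpre i (Fin.lt_def.mpr (by omega))
    · intro hi
      have hii : i = i₀ := Fin.ext (by omega)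
      rw [hii]
      exact ne_of_lt hlt
end

section
/- Let a, c, d ∈ I with c < d lexicographically, and suppose A_t(a,c) = A_t(a,d) = 1, with c − a = v[i_1,…,i_t] and d − a = v[j_1,…,j_t]. Let r = type(c,d). Then i_q = j_q for all q < r, i_r > j_r, and the first coordinate (in the order (1,1),…,(1,k),(2,1),…,(t,k)) at which c and d differ is coordinate (r, j_r). -/
lemma block_div (k q m : ℕ) (hk : 0 < k) (hm : m < k) : (q * k + m) / k = q := by
  rw [mul_comm, Nat.mul_add_div hk, Nat.div_eq_of_lt hm, add_zero]

lemma block_mod (k q m : ℕ) (hk : 0 < k) (hm : m < k) : (q * k + m) % k = m := by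
  rw [mul_comm, Nat.mul_add_mod, Nat.mod_eq_of_lt hm]

/-- If `c < d`, `A_t(a,c) = A_t(a,d) = 1` with `c − a = v[i_1,…,i_t]`,
`d − a = v[j_1,…,j_t]`, and `r = type(c,d)`, then `i_q = j_q` for `q < r`,
`i_r > j_r`, and the first coordinate where `c` and `d` differ is `(r, j_r)`
(flat 0-indexed coordinate `(r−1)·k + (j_r − 1)`). -/
theorem stmt5 (t k : ℕ) (ht : 2 ≤ t) (hk : 2 ≤ k)
    (a c d : Fin (t * k) → ℕ)
    (ha : memI t k a) (hc : memI t k c) (hd : memI t k d)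
    (hcd : lexLt c d)
    (is js : ℕ → ℕ) (his : validJs t k is) (hjs : validJs t k js)
    (hca : ∀ i : Fin (t * k), (c i : ℤ) - (a i : ℤ) = vVec k is i.val)
    (hda : ∀ i : Fin (t * k), (d i : ℤ) - (a i : ℤ) = vVec k js i.val)
    (r : ℕ) (hr : r = typeOf t k c d) :
    (∀ q, q + 1 < r → is q = js q) ∧
    js (r - 1) < is (r - 1) ∧
    (∀ i : Fin (t * k),
      (i.val < (r - 1) * k + (js (r - 1) - 1) → c i = d i) ∧
      (i.val = (r - 1) * k + (js (r - 1) - 1) → c i ≠ d i)) := by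
  have hk0 : 0 < k := by omega
  have hD : ∀ i : Fin (t*k), (d i : ℤ) - (c i : ℤ) = vVec k js i.val - vVec k is i.val := by
    intro i; linarith [hca i, hda i]
  obtain ⟨i0, hi0lt, hi0⟩ := hcd
  have hi0ne : c i0 ≠ d i0 := Nat.ne_of_lt hi0
  rw [typeOf] at hr
  have hsne : {r | ∃ i : Fin (t * k), i.val / k + 1 = r ∧ c i ≠ d i}.Nonempty :=
    ⟨i0.val / k + 1, i0, rfl, hi0ne⟩
  have hrmem : ∃ i : Fin (t*k), i.val / k + 1 = r ∧ c i ≠ d i := by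
    rw [hr]; exact Nat.sInf_mem hsne
  obtain ⟨i1, hi1r, hi1ne⟩ := hrmem
  have hrle : ∀ i : Fin (t*k), c i ≠ d i → r ≤ i.val / k + 1 := by
    intro i hi; rw [hr]; exact Nat.sInf_le ⟨i, rfl, hi⟩
  have hblock : ∀ i : Fin (t*k), i.val / k + 1 < r → c i = d i := by
    intro i hi; by_contra h; exact absurd (hrle i h) (by omega)
  have hr1 : 1 ≤ r := hi1r ▸ Nat.succ_le_succ (Nat.zero_le _)
  have hrt : r ≤ t := by
    have : i1.val / k < t := (Nat.div_lt_iff_lt_mul hk0).mpr i1.isLt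
    omega
  -- Part 1
  have part1 : ∀ q, q + 1 < r → is q = js q := by
    intro q hq
    obtain ⟨h1, h2⟩ := his q (by omega)
    have he : q * k + (is q - 1) < t * k := by
      have hle : (q+1) * k ≤ t * k := mul_le_mul_left (show q+1 ≤ t by omega) k
      rw [Nat.succ_mul] at hle; omega
    set e : Fin (t*k) := ⟨q * k + (is q - 1), he⟩ with hedef
    have hdiv : e.val / k = q := block_div k q _ hk0 (by omega)
    have hmod : e.val % k = is q - 1 := block_mod k q _ hk0 (by omega)
    have hce : c e = d e := hblock e (by omega)
    have hzero : vVec k js e.val - vVec k is e.val = 0 := by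
      rw [← hD e, hce]; ring
    have hise : is q - 1 + 1 = is q := by omega
    rw [vVec, vVec, hdiv, hmod, hise] at hzero
    by_contra hne
    rw [if_neg hne, if_pos rfl] at hzero
    have := ang_pos k ((List.range q).map is)
    omega
  -- prefix lists agree
  have hlist : (List.range (r-1)).map is = (List.range (r-1)).map js := by
    apply List.map_congr_left
    intro q hq
    rw [List.mem_range] at hq
    exact part1 q (by omega)
  have hi1div : i1.val / k = r - 1 := by omega
  have hne : is (r-1) ≠ js (r-1) := by
    intro heq
    apply hi1ne
    have h0 : vVec k js i1.val - vVec k is i1.val = 0 := by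
      rw [vVec, vVec, hi1div, hlist, heq]; ring
    have h2 := hD i1
    rw [h0] at h2
    exact_mod_cast (sub_eq_zero.mp h2).symm
  -- i0 lies in block r-1
  have hi0ge : r ≤ i0.val / k + 1 := hrle i0 hi0ne
  have hi0div : i0.val / k = r - 1 := by
    by_contra h
    have hgt : r - 1 + 1 ≤ i0.val / k := by omega
    have e1 := Nat.div_add_mod i1.val k
    have e0 := Nat.div_add_mod i0.val k
    have m1 : i1.val % k < k := Nat.mod_lt _ hk0
    have hm : k * (r - 1 + 1) ≤ k * (i0.val / k) := Nat.mul_le_mul_left k hgt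
    rw [Nat.mul_add, Nat.mul_one] at hm
    rw [hi1div] at e1
    have hlt : i1.val < i0.val := by omega
    exact hi1ne (hi0lt i1 hlt)
  have hDi0 : (0:ℤ) < vVec k js i0.val - vVec k is i0.val := by
    rw [← hD i0]
    have : (c i0 : ℤ) < d i0 := by exact_mod_cast hi0
    linarith
  rw [vVec, vVec, hi0div, hlist] at hDi0
  have hA := ang_pos k ((List.range (r-1)).map js)
  have hjmod : i0.val % k + 1 = js (r - 1) := by
    by_contra h
    rw [if_neg h] at hDi0
    split_ifs at hDi0 <;> omega
  have hjsR := hjs (r-1) (by omega)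
  have hi0val : i0.val = (r-1) * k + (js (r-1) - 1) := by
    have e0 := Nat.div_add_mod i0.val k
    rw [hi0div] at e0
    have hcomm : (r-1) * k = k * (r-1) := Nat.mul_comm _ _
    omega
  -- part 2
  obtain ⟨hisR1, hisR2⟩ := his (r-1) (by omega)
  have he2 : (r-1) * k + (is (r-1) - 1) < t * k := by
    have hle : (r-1+1) * k ≤ t * k := mul_le_mul_left (show r-1+1 ≤ t by omega) k
    rw [Nat.succ_mul] at hle; omega
  set e2 : Fin (t*k) := ⟨(r-1) * k + (is (r-1) - 1), he2⟩ with he2def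
  have hv2 : e2.val = (r-1) * k + (is (r-1) - 1) := rfl
  have hdiv2 : e2.val / k = r-1 := block_div k _ _ hk0 (by omega)
  have hmod2 : e2.val % k = is (r-1) - 1 := block_mod k _ _ hk0 (by omega)
  have hD2 : (d e2:ℤ) - c e2 = 0 - (ang k ((List.range (r-1)).map js) : ℤ) := by
    rw [hD e2, vVec, vVec, hdiv2, hmod2, hlist]
    rw [if_neg (by omega), if_pos (by omega)]
  have hne2 : c e2 ≠ d e2 := by
    intro h; rw [h] at hD2; omega
  have part2 : js (r-1) < is (r-1) := by
    rcases Nat.lt_or_ge (js (r-1)) (is (r-1)) with h | h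
    · exact h
    · exfalso
      rcases (show e2.val < i0.val ∨ e2.val = i0.val by rw [hv2, hi0val]; omega) with hlt | heq
      · exact hne2 (hi0lt e2 hlt)
      · rw [hv2, hi0val] at heq
        exact hne (by omega)
  refine ⟨part1, part2, fun i => ⟨?_, ?_⟩⟩
  · intro hlt
    exact hi0lt i (show i.val < i0.val by omega)
  · intro heq
    have hie : i = i0 := Fin.ext (by omega)
    rw [hie]; exact hi0ne
end

section
/- Let a, b, c_0, c_1, c_2, d ∈ I with a < b and c_0 < c_1 < c_2 < d lexicographically, and suppose A_t(a,c_0) = A_t(b,c_1) = A_t(a,c_2) = A_t(b,d) = A_t(a,d) = 1. If type(a,b) ≤ type(c_0,d), then type(c_0,d) < type(c_2,d). -/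
namespace S7

/-- numeric value of the digit list -/
def F (k : ℕ) (js : ℕ → ℕ) (r : ℕ) : ℕ :=
  ((List.range r).map js).foldl (fun acc j => acc * k + (j - 1)) 0

lemma F_succ (k : ℕ) (js : ℕ → ℕ) (r : ℕ) :
    F k js (r + 1) = F k js r * k + (js r - 1) := by
  simp [F, List.range_succ]

lemma ang_range (k : ℕ) (js : ℕ → ℕ) (r : ℕ) :
    ang k ((List.range r).map js) = F k js r + 1 := rfl

lemma F_congr {k : ℕ} {js js' : ℕ → ℕ} {r : ℕ} (h : ∀ r' < r, js r' = js' r') :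
    F k js r = F k js' r := by
  unfold F
  congr 1
  exact List.map_congr_left (fun x hx => h x (List.mem_range.mp hx))

lemma F_lt {k : ℕ} (hk : 1 ≤ k) {js js' : ℕ → ℕ} {m r : ℕ} (hmr : m < r)
    (hpre : ∀ r' < m, js r' = js' r') (hm : js m < js' m) (h1 : 1 ≤ js m)
    (hub : ∀ r', m < r' → r' < r → js r' ≤ k) :
    F k js r < F k js' r := by
  induction r with
  | zero => omega
  | succ n ih =>
    rcases Nat.lt_or_ge m n with h | h
    · have hlt : F k js n < F k js' n := ih h (fun r' h1 h2 => hub r' h1 (by omega))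
      have hub' : js n ≤ k := hub n h (by omega)
      rw [F_succ, F_succ]
      have : F k js n * k + k ≤ F k js' n * k := by
        have := Nat.mul_le_mul_right k (Nat.succ_le_of_lt hlt)
        simpa [Nat.succ_mul] using this
      omega
    · have hmn : m = n := by omega
      subst hmn
      rw [F_succ, F_succ, F_congr hpre]
      have : js m - 1 < js' m - 1 := by omega
      omega

def lexPos {N : ℕ} (D : Fin N → ℤ) : Prop :=
  ∃ i : Fin N, (∀ j, j < i → D j = 0) ∧ 0 < D i

lemma lexPos_of {N : ℕ} {a b : Fin N → ℕ} (h : lexLt a b) {D : Fin N → ℤ}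
    (hD : ∀ i, D i = (b i : ℤ) - (a i : ℤ)) : lexPos D := by
  obtain ⟨i, h0, hi⟩ := h
  exact ⟨i, fun j hj => by rw [hD, h0 j hj]; ring, by rw [hD]; omega⟩

lemma lexPos_not_firstNeg {N : ℕ} {D : Fin N → ℤ} (hD : lexPos D) (i₀ : Fin N)
    (h0 : ∀ i, i < i₀ → D i = 0) : ¬ D i₀ < 0 := by
  intro hneg
  obtain ⟨i, hz, hpos⟩ := hD
  rcases lt_trichotomy i i₀ with h | h | h
  · have := h0 i h; omega
  · subst h; omega
  · have := hz i₀ h; omega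

lemma div_mul_add {k r s : ℕ} (hk : 0 < k) (hs : s < k) : (k * r + s) / k = r := by
  rw [Nat.mul_add_div hk, Nat.div_eq_of_lt hs]; omega

lemma mod_mul_add {k r s : ℕ} (hs : s < k) : (k * r + s) % k = s := by
  rw [Nat.mul_add_mod, Nat.mod_eq_of_lt hs]

/-- main workhorse: if `D` is lex-positive, zero on blocks before `r`, and in block `r`
(0-indexed) it is zero at positions (1-indexed) before `x₀` and negative at `x₀`, contradiction. -/
lemma blockNeg {t k : ℕ} (hk : 1 ≤ k) {D : Fin (t * k) → ℤ} (hD : lexPos D)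
    (r x₀ : ℕ) (hr : r < t) (hx1 : 1 ≤ x₀) (hx2 : x₀ ≤ k)
    (h0 : ∀ i : Fin (t * k), i.val / k < r → D i = 0)
    (hb : ∀ i : Fin (t * k), i.val / k = r →
      (i.val % k + 1 < x₀ → D i = 0) ∧ (i.val % k + 1 = x₀ → D i < 0)) : False := by
  have hkpos : 0 < k := hk
  have hbound : k * r + (x₀ - 1) < t * k := by
    have h1 : k * r + (x₀ - 1) < k * (r + 1) := by
      have : x₀ - 1 < k := by omega
      rw [Nat.mul_succ]; omega
    have h2 : k * (r + 1) ≤ k * t := Nat.mul_le_mul_left k hr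
    rw [Nat.mul_comm t k]; omega
  set i₀ : Fin (t * k) := ⟨k * r + (x₀ - 1), hbound⟩ with hi₀
  have hdiv : (i₀ : ℕ) / k = r := div_mul_add hkpos (by omega)
  have hmod : (i₀ : ℕ) % k = x₀ - 1 := mod_mul_add (by omega)
  have hneg : D i₀ < 0 := (hb i₀ hdiv).2 (by omega)
  refine lexPos_not_firstNeg hD i₀ ?_ hneg
  intro i hi
  have hdm : k * ((i : ℕ) / k) + (i : ℕ) % k = (i : ℕ) := Nat.div_add_mod _ _
  have hmk : (i : ℕ) % k < k := Nat.mod_lt _ hkpos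
  rcases Nat.lt_or_ge ((i : ℕ) / k) r with h | h
  · exact h0 i h
  · have heq : (i : ℕ) / k = r := by
      by_contra hne
      have : r + 1 ≤ (i : ℕ) / k := by omega
      have := Nat.mul_le_mul_left k this
      have hii : (i : ℕ) < k * r + (x₀ - 1) := hi
      rw [Nat.mul_succ] at this
      omega
    have hii : (i : ℕ) < k * r + (x₀ - 1) := hi
    rw [heq] at hdm
    exact (hb i heq).1 (by omega)

lemma vVec_congr {k : ℕ} {js js' : ℕ → ℕ} {n : ℕ} (h : ∀ r ≤ n, js r = js' r)
    {i : ℕ} (hi : i / k ≤ n) : vVec k js i = vVec k js' i := by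
  unfold vVec
  rw [h _ hi, List.map_congr_left (fun x hx => h x (le_of_lt (lt_of_lt_of_le (List.mem_range.mp hx) hi)))]

end S7


namespace S7

/-- characterize `typeOf` when the difference is `vVec J - vVec P`. -/
lemma typeOf_eq {t k : ℕ} (hk : 1 ≤ k) {a b : Fin (t * k) → ℕ} {J P : ℕ → ℕ}
    (hJ : validJs t k J)
    (hdiff : ∀ i : Fin (t * k), (b i : ℤ) - (a i : ℤ) = vVec k J i.val - vVec k P i.val)
    {r₀ : ℕ} (hr₀ : r₀ < t) (hpre : ∀ r < r₀, J r = P r) (hne : J r₀ ≠ P r₀) :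
    typeOf t k a b = r₀ + 1 := by
  have hj1 : 1 ≤ J r₀ := (hJ r₀ hr₀).1
  have hj2 : J r₀ ≤ k := (hJ r₀ hr₀).2
  have hbound : k * r₀ + (J r₀ - 1) < t * k := by
    have h2 : k * (r₀ + 1) ≤ k * t := Nat.mul_le_mul_left k hr₀
    rw [Nat.mul_comm t k]; rw [Nat.mul_succ] at h2; omega
  set i₀ : Fin (t * k) := ⟨k * r₀ + (J r₀ - 1), hbound⟩ with hi₀
  have hdiv : (i₀ : ℕ) / k = r₀ := div_mul_add hk (by omega)
  have hmod : (i₀ : ℕ) % k = J r₀ - 1 := mod_mul_add (by omega)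
  have hvJ : vVec k J (i₀ : ℕ) = ((F k J r₀ : ℤ) + 1) := by
    unfold vVec; rw [hdiv, hmod, if_pos (by omega), ang_range]; push_cast; ring
  have hvP : vVec k P (i₀ : ℕ) = 0 := by
    unfold vVec; rw [hdiv, hmod, if_neg (by omega)]
  have hane : a i₀ ≠ b i₀ := by
    have hd := hdiff i₀
    rw [hvJ, hvP] at hd
    intro h; rw [h] at hd; omega
  have hmem : r₀ + 1 ∈ {r | ∃ i : Fin (t * k), i.val / k + 1 = r ∧ a i ≠ b i} :=
    ⟨i₀, by omega, hane⟩
  have hnon : {r | ∃ i : Fin (t * k), i.val / k + 1 = r ∧ a i ≠ b i}.Nonempty := ⟨_, hmem⟩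
  unfold typeOf
  refine le_antisymm (Nat.sInf_le hmem) ?_
  obtain ⟨i, hik, hiab⟩ := Nat.sInf_mem hnon
  rw [← hik]
  by_contra hlt
  have hik' : (i : ℕ) / k < r₀ := by omega
  have hv : vVec k J (i : ℕ) = vVec k P (i : ℕ) :=
    vVec_congr (n := (i : ℕ) / k) (fun r hr => hpre r (by omega)) le_rfl
  have hd := hdiff i
  omega

/-- existence of the first-difference index, with order information. -/
lemma exists_fd {t k : ℕ} (hk : 1 ≤ k) {a b : Fin (t * k) → ℕ} {J P : ℕ → ℕ}
    (hJ : validJs t k J) (hP : validJs t k P)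
    (hdiff : ∀ i : Fin (t * k), (b i : ℤ) - (a i : ℤ) = vVec k J i.val - vVec k P i.val)
    (hlt : lexLt a b) :
    ∃ r₀, r₀ < t ∧ (∀ r < r₀, J r = P r) ∧ J r₀ ≠ P r₀ ∧
      typeOf t k a b = r₀ + 1 ∧ J r₀ < P r₀ := by
  have hnon : {r | r < t ∧ J r ≠ P r}.Nonempty := by
    obtain ⟨i, _, hi⟩ := hlt
    by_contra hemp
    rw [Set.not_nonempty_iff_eq_empty] at hemp
    have hemp' : ∀ r, r < t → J r = P r := by
      intro r hr
      by_contra hne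
      exact (Set.eq_empty_iff_forall_notMem.mp hemp r) ⟨hr, hne⟩
    have hik : (i : ℕ) / k < t := by
      have h1 : (i : ℕ) < k * t := by rw [Nat.mul_comm k t]; exact i.isLt
      exact Nat.div_lt_of_lt_mul h1
    have hv : vVec k J (i : ℕ) = vVec k P (i : ℕ) :=
      vVec_congr (n := (i : ℕ) / k) (fun r hr => hemp' r (by omega)) le_rfl
    have hd := hdiff i
    omega
  obtain ⟨r₀, hmem, hmin⟩ : ∃ r₀, (r₀ < t ∧ J r₀ ≠ P r₀) ∧
      ∀ r, (r < t ∧ J r ≠ P r) → r₀ ≤ r :=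
    ⟨sInf {r | r < t ∧ J r ≠ P r}, Nat.sInf_mem hnon, fun r hr => Nat.sInf_le hr⟩
  obtain ⟨hr₀t, hr₀ne⟩ := hmem
  have hpre : ∀ r < r₀, J r = P r := by
    intro r hr
    by_contra hne
    have := hmin r ⟨by omega, hne⟩
    omega
  refine ⟨r₀, hr₀t, hpre, hr₀ne, typeOf_eq hk hJ hdiff hr₀t hpre hr₀ne, ?_⟩
  by_contra hge
  have hPJ : P r₀ < J r₀ := by omega
  have hDpos : lexPos (fun i : Fin (t * k) => (b i : ℤ) - a i) := lexPos_of hlt (fun i => rfl)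
  have hp1 : 1 ≤ P r₀ := (hP r₀ hr₀t).1
  have hp2 : P r₀ ≤ k := (hP r₀ hr₀t).2
  refine blockNeg hk hDpos r₀ (P r₀) hr₀t hp1 hp2 ?_ ?_
  · intro i hi
    have hv : vVec k J (i : ℕ) = vVec k P (i : ℕ) :=
      vVec_congr (n := (i : ℕ) / k) (fun r hr => hpre r (by omega)) le_rfl
    have hd := hdiff i
    show (b i : ℤ) - a i = 0
    omega
  · intro i hi
    have hJi : vVec k J (i : ℕ) = if (i : ℕ) % k + 1 = J r₀ then ((F k J r₀ : ℤ) + 1) else 0 := by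
      unfold vVec; rw [hi, ang_range]; split_ifs <;> [push_cast; rfl]; ring
    have hPi : vVec k P (i : ℕ) = if (i : ℕ) % k + 1 = P r₀ then ((F k P r₀ : ℤ) + 1) else 0 := by
      unfold vVec; rw [hi, ang_range]; split_ifs <;> [push_cast; rfl]; ring
    have hFF : F k J r₀ = F k P r₀ := F_congr hpre
    have hd := hdiff i
    rw [hJi, hPi] at hd
    constructor
    · intro hx
      show (b i : ℤ) - a i = 0
      rw [hd, if_neg (by omega), if_neg (by omega)]; ring
    · intro hx
      show (b i : ℤ) - a i < 0
      rw [hd, if_neg (by omega), if_pos (by omega)]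
      have : (0 : ℤ) ≤ (F k P r₀ : ℤ) := Int.natCast_nonneg _
      omega

lemma lexLt_trans {N : ℕ} {a b c : Fin N → ℕ} (h1 : lexLt a b) (h2 : lexLt b c) :
    lexLt a c := by
  obtain ⟨i1, hz1, hl1⟩ := h1
  obtain ⟨i2, hz2, hl2⟩ := h2
  rcases lt_trichotomy i1 i2 with h | h | h
  · exact ⟨i1, fun j hj => (hz1 j hj).trans (hz2 j (hj.trans h)), by rw [← hz2 i1 h]; exact hl1⟩
  · subst h; exact ⟨i1, fun j hj => (hz1 j hj).trans (hz2 j hj), hl1.trans hl2⟩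
  · exact ⟨i2, fun j hj => (hz1 j (hj.trans h)).trans (hz2 j hj), by rw [hz1 i2 h]; exact hl2⟩

end S7


/-- If `a < b`, `c₀ < c₁ < c₂ < d`,
`A_t(a,c₀) = A_t(b,c₁) = A_t(a,c₂) = A_t(b,d) = A_t(a,d) = 1`, and
`type(a,b) ≤ type(c₀,d)`, then `type(c₀,d) < type(c₂,d)`. -/
theorem stmt7 (t k : ℕ) (ht : 2 ≤ t) (hk : 2 ≤ k)
    (a b c₀ c₁ c₂ d : Fin (t * k) → ℕ)
    (ha : memI t k a) (hb : memI t k b)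
    (hc₀ : memI t k c₀) (hc₁ : memI t k c₁) (hc₂ : memI t k c₂) (hd : memI t k d)
    (hab : lexLt a b) (h01 : lexLt c₀ c₁) (h12 : lexLt c₁ c₂) (h2d : lexLt c₂ d)
    (e0 : AtOne t k a c₀) (e1 : AtOne t k b c₁) (e2 : AtOne t k a c₂)
    (e3 : AtOne t k b d) (e4 : AtOne t k a d)
    (hty : typeOf t k a b ≤ typeOf t k c₀ d) :
    typeOf t k c₀ d < typeOf t k c₂ d := by
  have hk1 : 1 ≤ k := by omega
  obtain ⟨J, hJv, hJ⟩ := e4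
  obtain ⟨U, hUv, hU⟩ := e0
  obtain ⟨W, hWv, hW⟩ := e2
  obtain ⟨L, hLv, hL⟩ := e3
  obtain ⟨K, hKv, hK⟩ := e1
  -- pointwise difference identities
  have hdc0 : ∀ i : Fin (t * k), (d i : ℤ) - c₀ i = vVec k J i.val - vVec k U i.val := by
    intro i; linarith [hJ i, hU i]
  have hdc2 : ∀ i : Fin (t * k), (d i : ℤ) - c₂ i = vVec k J i.val - vVec k W i.val := by
    intro i; linarith [hJ i, hW i]
  have hba : ∀ i : Fin (t * k), (b i : ℤ) - a i = vVec k J i.val - vVec k L i.val := by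
    intro i; linarith [hJ i, hL i]
  have hD1 : ∀ i : Fin (t * k), (c₁ i : ℤ) - c₀ i =
      vVec k J i.val + vVec k K i.val - vVec k U i.val - vVec k L i.val := by
    intro i; linarith [hJ i, hU i, hL i, hK i]
  have hD2 : ∀ i : Fin (t * k), (c₂ i : ℤ) - c₁ i =
      vVec k W i.val + vVec k L i.val - vVec k J i.val - vVec k K i.val := by
    intro i; linarith [hJ i, hW i, hL i, hK i]
  have h0d : lexLt c₀ d := S7.lexLt_trans h01 (S7.lexLt_trans h12 h2d)
  obtain ⟨p₀, hp₀t, hpreU, hneU, htyU, hltU⟩ := S7.exists_fd hk1 hJv hUv hdc0 h0d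
  obtain ⟨q₀, hq₀t, hpreW, hneW, htyW, hltW⟩ := S7.exists_fd hk1 hJv hWv hdc2 h2d
  obtain ⟨m₀, hm₀t, hpreL, hneL, htyL, hltL⟩ := S7.exists_fd hk1 hJv hLv hba hab
  rw [htyU, htyL] at hty
  rw [htyU, htyW]
  have hmp : m₀ ≤ p₀ := by omega
  by_contra hgoal
  have hqp : q₀ ≤ p₀ := by omega
  clear hgoal hty
  have P1 : S7.lexPos (fun i : Fin (t * k) => (c₁ i : ℤ) - c₀ i) := S7.lexPos_of h01 (fun i => rfl)
  have P2 : S7.lexPos (fun i : Fin (t * k) => (c₂ i : ℤ) - c₁ i) := S7.lexPos_of h12 (fun i => rfl)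
  -- forcing: K agrees with L on blocks before q₀
  have hKL : ∀ r, r < q₀ → K r = L r := by
    by_contra hno
    push_neg at hno
    have hnon : {r | r < q₀ ∧ K r ≠ L r}.Nonempty := by
      obtain ⟨r, h1, h2⟩ := hno; exact ⟨r, h1, h2⟩
    obtain ⟨r, ⟨hrq, hrne⟩, hmin⟩ : ∃ r, (r < q₀ ∧ K r ≠ L r) ∧
        ∀ r', (r' < q₀ ∧ K r' ≠ L r') → r ≤ r' :=
      ⟨sInf {r | r < q₀ ∧ K r ≠ L r}, Nat.sInf_mem hnon, fun r hr => Nat.sInf_le hr⟩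
    have hpreKL : ∀ r' < r, K r' = L r' := by
      intro r' hr'
      by_contra hne
      have := hmin r' ⟨by omega, hne⟩
      omega
    have hrt : r < t := by omega
    have hzero : ∀ i : Fin (t * k), i.val / k < r →
        ((c₁ i : ℤ) - c₀ i = 0 ∧ (c₂ i : ℤ) - c₁ i = 0) := by
      intro i hi
      have hJU : vVec k J i.val = vVec k U i.val :=
        S7.vVec_congr (n := i.val / k) (fun r' hr' => hpreU r' (by omega)) le_rfl
      have hJW : vVec k J i.val = vVec k W i.val :=
        S7.vVec_congr (n := i.val / k) (fun r' hr' => hpreW r' (by omega)) le_rfl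
      have hKLi : vVec k K i.val = vVec k L i.val :=
        S7.vVec_congr (n := i.val / k) (fun r' hr' => hpreKL r' (by omega)) le_rfl
      constructor
      · rw [hD1 i]; omega
      · rw [hD2 i]; omega
    have hblockJU : ∀ i : Fin (t * k), i.val / k = r → vVec k J i.val = vVec k U i.val := by
      intro i hi
      exact S7.vVec_congr (n := i.val / k) (fun r' hr' => hpreU r' (by omega)) le_rfl
    have hblockJW : ∀ i : Fin (t * k), i.val / k = r → vVec k J i.val = vVec k W i.val := by
      intro i hi
      exact S7.vVec_congr (n := i.val / k) (fun r' hr' => hpreW r' (by omega)) le_rfl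
    have hvAt : ∀ (X : ℕ → ℕ) (i : Fin (t * k)), i.val / k = r →
        vVec k X i.val = if i.val % k + 1 = X r then ((S7.F k X r : ℤ) + 1) else 0 := by
      intro X i hi
      unfold vVec; rw [hi, S7.ang_range]; split_ifs <;> [push_cast; rfl]; ring
    have hFKL : S7.F k K r = S7.F k L r := S7.F_congr hpreKL
    rcases Nat.lt_or_ge (K r) (L r) with hcase | hcase
    · refine S7.blockNeg hk1 P2 r (K r) hrt (hKv r hrt).1 (hKv r hrt).2
        (fun i hi => (hzero i hi).2) ?_
      intro i hi
      have h2 := hD2 i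
      rw [← hblockJW i hi, hvAt K i hi, hvAt L i hi, hFKL] at h2
      constructor
      · intro hx
        show (c₂ i : ℤ) - c₁ i = 0
        rw [h2, if_neg (by omega), if_neg (by omega)]; ring
      · intro hx
        show (c₂ i : ℤ) - c₁ i < 0
        rw [h2, if_neg (by omega), if_pos (by omega)]
        have : (0 : ℤ) ≤ (S7.F k L r : ℤ) := Int.natCast_nonneg _
        omega
    · have hcase' : L r < K r := by omega
      refine S7.blockNeg hk1 P1 r (L r) hrt (hLv r hrt).1 (hLv r hrt).2
        (fun i hi => (hzero i hi).1) ?_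
      intro i hi
      have h1 := hD1 i
      rw [hblockJU i hi, hvAt K i hi, hvAt L i hi, hFKL] at h1
      constructor
      · intro hx
        show (c₁ i : ℤ) - c₀ i = 0
        rw [h1, if_neg (by omega), if_neg (by omega)]; ring
      · intro hx
        show (c₁ i : ℤ) - c₀ i < 0
        rw [h1, if_neg (by omega), if_pos (by omega)]
        have : (0 : ℤ) ≤ (S7.F k L r : ℤ) := Int.natCast_nonneg _
        omega
  -- endgame facts
  have hzeroq : ∀ i : Fin (t * k), i.val / k < q₀ →
      ((c₁ i : ℤ) - c₀ i = 0 ∧ (c₂ i : ℤ) - c₁ i = 0) := by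
    intro i hi
    have hJU : vVec k J i.val = vVec k U i.val :=
      S7.vVec_congr (n := i.val / k) (fun r' hr' => hpreU r' (by omega)) le_rfl
    have hJW : vVec k J i.val = vVec k W i.val :=
      S7.vVec_congr (n := i.val / k) (fun r' hr' => hpreW r' (by omega)) le_rfl
    have hKLi : vVec k K i.val = vVec k L i.val :=
      S7.vVec_congr (n := i.val / k) (fun r' hr' => hKL r' (by omega)) le_rfl
    constructor
    · rw [hD1 i]; omega
    · rw [hD2 i]; omega
  have hvAtq : ∀ (X : ℕ → ℕ) (i : Fin (t * k)), i.val / k = q₀ →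
      vVec k X i.val = if i.val % k + 1 = X q₀ then ((S7.F k X q₀ : ℤ) + 1) else 0 := by
    intro X i hi
    unfold vVec; rw [hi, S7.ang_range]; split_ifs <;> [push_cast; rfl]; ring
  have hFU : S7.F k U q₀ = S7.F k J q₀ := S7.F_congr (fun r hr => (hpreU r (by omega)).symm)
  have hFW : S7.F k W q₀ = S7.F k J q₀ := S7.F_congr (fun r hr => (hpreW r (by omega)).symm)
  have hFK : S7.F k K q₀ = S7.F k L q₀ := S7.F_congr (fun r hr => hKL r hr)
  have hcJ0 : (0 : ℤ) ≤ (S7.F k J q₀ : ℤ) := Int.natCast_nonneg _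
  have hcL0 : (0 : ℤ) ≤ (S7.F k L q₀ : ℤ) := Int.natCast_nonneg _
  have hcC : (S7.F k J q₀ : ℤ) ≤ (S7.F k L q₀ : ℤ) := by
    rcases Nat.lt_or_ge m₀ q₀ with h | h
    · have : S7.F k J q₀ < S7.F k L q₀ :=
        S7.F_lt hk1 h hpreL hltL (hJv m₀ hm₀t).1 (fun r' h1 h2 => (hJv r' (by omega)).2)
      omega
    · have : S7.F k J q₀ = S7.F k L q₀ := S7.F_congr (fun r hr => hpreL r (by omega))
      omega
  have hju : J q₀ ≤ U q₀ := by
    rcases Nat.lt_or_ge q₀ p₀ with h | h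
    · rw [hpreU q₀ h]
    · have hqe : q₀ = p₀ := by omega
      rw [hqe]; exact le_of_lt hltU
  have hjw : J q₀ < W q₀ := hltW
  have hf1 : ∀ i : Fin (t * k), i.val / k = q₀ → (c₁ i : ℤ) - c₀ i =
      (if i.val % k + 1 = J q₀ then ((S7.F k J q₀ : ℤ) + 1) else 0)
      - (if i.val % k + 1 = U q₀ then ((S7.F k J q₀ : ℤ) + 1) else 0)
      + (if i.val % k + 1 = K q₀ then ((S7.F k L q₀ : ℤ) + 1) else 0)
      - (if i.val % k + 1 = L q₀ then ((S7.F k L q₀ : ℤ) + 1) else 0) := by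
    intro i hi
    rw [hD1 i, hvAtq J i hi, hvAtq U i hi, hvAtq K i hi, hvAtq L i hi, hFU, hFK]
    try ring
  have hf2 : ∀ i : Fin (t * k), i.val / k = q₀ → (c₂ i : ℤ) - c₁ i =
      (if i.val % k + 1 = W q₀ then ((S7.F k J q₀ : ℤ) + 1) else 0)
      + (if i.val % k + 1 = L q₀ then ((S7.F k L q₀ : ℤ) + 1) else 0)
      - (if i.val % k + 1 = J q₀ then ((S7.F k J q₀ : ℤ) + 1) else 0)
      - (if i.val % k + 1 = K q₀ then ((S7.F k L q₀ : ℤ) + 1) else 0) := by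
    intro i hi
    rw [hD2 i, hvAtq W i hi, hvAtq J i hi, hvAtq K i hi, hvAtq L i hi, hFW, hFK]
    try ring
  have hbJ := hJv q₀ hq₀t
  have hbU := hUv q₀ hq₀t
  have hbW := hWv q₀ hq₀t
  have hbL := hLv q₀ hq₀t
  have hbK := hKv q₀ hq₀t
  rcases lt_trichotomy (K q₀) (L q₀) with hKLq | hKLq | hKLq
  · -- k' < l : P2 at min j k'
    refine S7.blockNeg hk1 P2 q₀ (min (J q₀) (K q₀)) hq₀t (by omega) (by omega)
      (fun i hi => (hzeroq i hi).2) ?_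
    intro i hi
    have h2 := hf2 i hi
    constructor
    · intro hx
      show (c₂ i : ℤ) - c₁ i = 0
      rw [h2]; split_ifs <;> omega
    · intro hx
      show (c₂ i : ℤ) - c₁ i < 0
      rw [h2]; split_ifs <;> omega
  · -- k' = l : P2 at j
    refine S7.blockNeg hk1 P2 q₀ (J q₀) hq₀t hbJ.1 hbJ.2
      (fun i hi => (hzeroq i hi).2) ?_
    intro i hi
    have h2 := hf2 i hi
    constructor
    · intro hx
      show (c₂ i : ℤ) - c₁ i = 0
      rw [h2]; split_ifs <;> omega
    · intro hx
      show (c₂ i : ℤ) - c₁ i < 0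
      rw [h2]; split_ifs <;> omega
  · -- l < k'
    rcases Nat.lt_or_ge (J q₀) (L q₀) with hjl | hjl
    · -- j < l : P2 at j
      refine S7.blockNeg hk1 P2 q₀ (J q₀) hq₀t hbJ.1 hbJ.2
        (fun i hi => (hzeroq i hi).2) ?_
      intro i hi
      have h2 := hf2 i hi
      constructor
      · intro hx
        show (c₂ i : ℤ) - c₁ i = 0
        rw [h2]; split_ifs <;> omega
      · intro hx
        show (c₂ i : ℤ) - c₁ i < 0
        rw [h2]; split_ifs <;> omega
    · -- l ≤ j : P1 at l
      have hstr : L q₀ = J q₀ → J q₀ < U q₀ → (S7.F k J q₀ : ℤ) < (S7.F k L q₀ : ℤ) := by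
        intro hlj hju'
        rcases lt_trichotomy m₀ q₀ with h | h | h
        · have : S7.F k J q₀ < S7.F k L q₀ :=
            S7.F_lt hk1 h hpreL hltL (hJv m₀ hm₀t).1 (fun r' h1 h2 => (hJv r' (by omega)).2)
          omega
        · exfalso; rw [← h] at hlj; omega
        · exfalso
          have hq₀p : q₀ < p₀ := by omega
          have := hpreU q₀ hq₀p
          omega
      have hstr' : (L q₀ = J q₀ ∧ J q₀ < U q₀) → (S7.F k J q₀ : ℤ) < (S7.F k L q₀ : ℤ) :=
        fun h => hstr h.1 h.2
      refine S7.blockNeg hk1 P1 q₀ (L q₀) hq₀t hbL.1 hbL.2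
        (fun i hi => (hzeroq i hi).1) ?_
      intro i hi
      have h1 := hf1 i hi
      rcases Nat.lt_or_ge (L q₀) (J q₀) with hlj2 | hlj2
      · constructor
        · intro hx
          show (c₁ i : ℤ) - c₀ i = 0
          rw [h1]; split_ifs <;> omega
        · intro hx
          show (c₁ i : ℤ) - c₀ i < 0
          rw [h1]; split_ifs <;> omega
      · have hlj3 : L q₀ = J q₀ := by omega
        rcases Nat.lt_or_ge (J q₀) (U q₀) with hju2 | hju2
        · have hCCs := hstr' ⟨hlj3, hju2⟩
          constructor
          · intro hx
            show (c₁ i : ℤ) - c₀ i = 0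
            rw [h1]; split_ifs <;> omega
          · intro hx
            show (c₁ i : ℤ) - c₀ i < 0
            rw [h1]; split_ifs <;> omega
        · have hju3 : U q₀ = J q₀ := by omega
          constructor
          · intro hx
            show (c₁ i : ℤ) - c₀ i = 0
            rw [h1]; split_ifs <;> omega
          · intro hx
            show (c₁ i : ℤ) - c₀ i < 0
            rw [h1]; split_ifs <;> omega
end

section
/- Suppose a < b in I and d_1 < d_2 < ⋯ < d_{2t} in I (lexicographic order) satisfy A_t(a, d_{2i−1}) = 1 for all i ∈ [t], A_t(b, d_{2i}) = 1 for all i ∈ [t−1], and A_t(a, d_{2t}) = A_t(b, d_{2t}) = 1 (an occurrence of the pattern P_t in A_t with rows a, b and columns d_1, …, d_{2t}). If type(a,b) ≤ type(d_1, d_{2t}), then type(a,b) = type(d_1, d_{2t}) = 1. -/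
-- falsification lemma
lemma lex_falsify {N : ℕ} {X Y : Fin N → ℕ} (h : lexLt X Y) (i0 : Fin N)
    (hb : ∀ j : Fin N, j.val < i0.val → X j = Y j) (hi : Y i0 < X i0) : False := by
  obtain ⟨i, hpre, hlt⟩ := h
  rcases lt_trichotomy i.val i0.val with hc | hc | hc
  · have := hb i hc; omega
  · have : i = i0 := Fin.ext hc
    subst this; omega
  · have := hpre i0 (by exact hc); omega

lemma lex_irrefl {N : ℕ} {X : Fin N → ℕ} (h : lexLt X X) : False := by
  obtain ⟨i, _, hlt⟩ := h; omega

noncomputable def fdiff {N : ℕ} {X Y : Fin N → ℕ} (h : lexLt X Y) : Fin N := h.choose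

lemma fdiff_spec {N : ℕ} {X Y : Fin N → ℕ} (h : lexLt X Y) :
    (∀ j : Fin N, j < fdiff h → X j = Y j) ∧ X (fdiff h) < Y (fdiff h) := h.choose_spec

lemma fd_mono {N : ℕ} {X Y Z : Fin N → ℕ} (hxy : lexLt X Y) (hyz : lexLt Y Z)
    (hxz : lexLt X Z) : (fdiff hxz).val ≤ (fdiff hyz).val := by
  by_contra hcon
  push_neg at hcon
  obtain ⟨hyz1, hyz2⟩ := fdiff_spec hyz
  obtain ⟨hxz1, hxz2⟩ := fdiff_spec hxz
  have hXfZf : X (fdiff hyz) = Z (fdiff hyz) := hxz1 (fdiff hyz) (by exact hcon)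
  obtain ⟨e, he1, he2⟩ := hxy
  rcases lt_trichotomy e.val (fdiff hyz).val with hc | hc | hc
  · have h1 : X e = Z e := hxz1 e (by omega)
    have h2 : Y e = Z e := hyz1 e (by exact hc)
    omega
  · have heq : e = fdiff hyz := Fin.ext hc
    rw [heq] at he2; omega
  · have := he1 (fdiff hyz) (by exact hc); omega

lemma foldl_range_succ (k e : ℕ) (z : ℕ → ℕ) :
    ((List.range (e+1)).map z).foldl (fun acc j => acc * k + (j - 1)) 0
  = (((List.range e).map z).foldl (fun acc j => acc * k + (j - 1)) 0) * k + (z e - 1) := by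
  rw [List.range_succ, List.map_append, List.foldl_append]; simp

lemma range_map_congr {e : ℕ} {x y : ℕ → ℕ} (h : ∀ r, r < e → x r = y r) :
    (List.range e).map x = (List.range e).map y :=
  List.map_congr_left (fun a ha => h a (List.mem_range.mp ha))

lemma ang_congr {k e : ℕ} {x y : ℕ → ℕ} (h : ∀ r, r < e → x r = y r) :
    ang k ((List.range e).map x) = ang k ((List.range e).map y) := by
  rw [range_map_congr h]

lemma ang_lt {k : ℕ} {x y : ℕ → ℕ} {s0 e : ℕ} (hk : 1 ≤ k)
    (hag : ∀ r, r < s0 → x r = y r) (hx1 : 1 ≤ x s0) (hxy : x s0 < y s0)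
    (hse : s0 < e) (hxk : ∀ r, r < e → x r ≤ k) (hy1 : ∀ r, r < e → 1 ≤ y r) :
    ang k ((List.range e).map x) < ang k ((List.range e).map y) := by
  suffices h : ∀ m, s0 < m → (∀ r, r < m → x r ≤ k) →
      (((List.range m).map x).foldl (fun acc j => acc * k + (j - 1)) 0) + 1
      ≤ ((List.range m).map y).foldl (fun acc j => acc * k + (j - 1)) 0 by
    have := h e hse hxk
    unfold ang; omega
  intro m
  induction m with
  | zero => omega
  | succ m ih =>
    intro hm hbd
    rw [foldl_range_succ, foldl_range_succ]
    rcases Nat.lt_or_ge s0 m with hc | hc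
    · have hih := ih hc (fun r hr => hbd r (by omega))
      have hmul : (((List.range m).map x).foldl (fun acc j => acc * k + (j - 1)) 0 + 1) * k
          ≤ ((List.range m).map y).foldl (fun acc j => acc * k + (j - 1)) 0 * k :=
        Nat.mul_le_mul_right k hih
      have hxm : x m ≤ k := hbd m (by omega)
      rw [Nat.add_mul] at hmul
      omega
    · have hm0 : m = s0 := by omega
      subst hm0
      have : ((List.range m).map x).foldl (fun acc j => acc * k + (j - 1)) 0
           = ((List.range m).map y).foldl (fun acc j => acc * k + (j - 1)) 0 := by
        rw [range_map_congr hag]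
      rw [this]
      omega

lemma vVec_at {k : ℕ} (js : ℕ → ℕ) (e ρ : ℕ) (hk : 0 < k) (hρ : ρ < k) :
    vVec k js (e * k + ρ) = if ρ + 1 = js e then ((ang k ((List.range e).map js) : ℕ) : ℤ) else 0 := by
  unfold vVec
  have h1 : (e * k + ρ) / k = e := by
    rw [Nat.mul_comm, Nat.mul_add_div hk, Nat.div_eq_of_lt hρ, Nat.add_zero]
  have h2 : (e * k + ρ) % k = ρ := by
    rw [Nat.mul_comm, Nat.mul_add_mod, Nat.mod_eq_of_lt hρ]
  rw [h1, h2]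

lemma vVec_congr_s8 {k : ℕ} {x y : ℕ → ℕ} (n : ℕ) (h : ∀ r, r ≤ n / k → x r = y r) :
    vVec k x n = vVec k y n := by
  unfold vVec
  have h1 : x (n/k) = y (n/k) := h _ le_rfl
  have h2 : (List.range (n/k)).map x = (List.range (n/k)).map y :=
    range_map_congr (fun a ha => h a (le_of_lt ha))
  rw [h1, h2]

lemma coord_lt {t k e ρ : ℕ} (he : e < t) (hρ : ρ < k) : e * k + ρ < t * k :=
  calc e * k + ρ < e * k + k := by omega
    _ = (e+1) * k := by ring
    _ ≤ t * k := Nat.mul_le_mul_right k (by omega)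

lemma div_lt_of_lt_mul' {k n e : ℕ} (hk : 0 < k) (h : n < e * k) : n / k < e :=
  (Nat.div_lt_iff_lt_mul hk).mpr h

lemma aux_gt {t k : ℕ} (hk : 1 ≤ k) {base : Fin (t*k) → ℤ} {X L : Fin (t*k) → ℕ}
    {w z : ℕ → ℕ} (hwv : validJs t k w) (hzv : validJs t k z)
    (hX : ∀ x : Fin (t*k), (X x : ℤ) = base x + vVec k w x.val)
    (hL : ∀ x : Fin (t*k), (L x : ℤ) = base x + vVec k z x.val)
    {e : ℕ} (he : e < t) (hag : ∀ r, r < e → w r = z r) (hne : w e ≠ z e)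
    (hlt : lexLt X L) : z e < w e := by
  by_contra hcon
  push_neg at hcon
  have hwe : w e < z e := lt_of_le_of_ne hcon hne
  have hw1 : 1 ≤ w e := (hwv e he).1
  have hwk : w e ≤ k := (hwv e he).2
  have hzk : z e ≤ k := (hzv e he).2
  set i0 : Fin (t*k) := ⟨e * k + (w e - 1), coord_lt he (by omega)⟩ with hi0
  apply lex_falsify hlt i0
  · intro j hj
    have hjv : j.val < e * k + (w e - 1) := hj
    have hz : (X j : ℤ) = (L j : ℤ) := by
      rw [hX, hL]
      rcases Nat.lt_or_ge j.val (e * k) with hblk | hblk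
      · have hjk : j.val / k < e := div_lt_of_lt_mul' (by omega) hblk
        rw [vVec_congr_s8 j.val (fun r hr => hag r (by omega))]
      · obtain ⟨ρ, hρeq, hρlt⟩ : ∃ ρ, j.val = e * k + ρ ∧ ρ < w e - 1 := ⟨j.val - e*k, by omega, by omega⟩
        rw [hρeq, vVec_at w e ρ (by omega) (by omega), vVec_at z e ρ (by omega) (by omega),
          if_neg (by omega), if_neg (by omega)]
    exact_mod_cast hz
  · have hiv : i0.val = e * k + (w e - 1) := rfl
    have hXv : (X i0 : ℤ) = base i0 + (ang k ((List.range e).map w) : ℕ) := by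
      rw [hX, hiv, vVec_at w e _ (by omega) (by omega), if_pos (by omega)]
    have hLv : (L i0 : ℤ) = base i0 + 0 := by
      rw [hL, hiv, vVec_at z e _ (by omega) (by omega), if_neg (by omega)]
    have hang := ang_pos k ((List.range e).map w)
    have : (L i0 : ℤ) < (X i0 : ℤ) := by
      rw [hXv, hLv]
      have : (1:ℤ) ≤ (ang k ((List.range e).map w) : ℕ) := by exact_mod_cast hang
      omega
    exact_mod_cast this

section PairLemmas

variable {t k : ℕ} {a' : Fin (t*k) → ℤ} {X Y : Fin (t*k) → ℕ}
  {w u j1 j2 : ℕ → ℕ} {s0 e : ℕ}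

lemma aux_L1 (hk : 1 ≤ k)
    (hwv : validJs t k w) (huv : validJs t k u) (h1v : validJs t k j1) (h2v : validJs t k j2)
    (hX : ∀ x : Fin (t*k), (X x : ℤ) = a' x + vVec k w x.val)
    (hY : ∀ x : Fin (t*k), (Y x : ℤ) = a' x + vVec k j1 x.val - vVec k j2 x.val + vVec k u x.val)
    (hs0t : s0 < t) (hs0 : ∀ r, r < s0 → j1 r = j2 r) (hs0lt : j1 s0 < j2 s0) (hs0e : s0 ≤ e)
    (he : e < t) (hagw : ∀ r, r < e → w r = j1 r) (hagu : ∀ r, r < e → u r = j2 r)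
    (hgtw : j1 e < w e) (hgtu : j2 e < u e)
    (hlt : lexLt X Y) : j1 e < j2 e := by
  by_contra hq
  push_neg at hq  -- j2 e ≤ j1 e
  have hp1 : 1 ≤ j1 e := (h1v e he).1
  have hpk : j1 e ≤ k := (h1v e he).2
  have hq1 : 1 ≤ j2 e := (h2v e he).1
  have hqk : j2 e ≤ k := (h2v e he).2
  have hwk : w e ≤ k := (hwv e he).2
  have huk : u e ≤ k := (huv e he).2
  have hcu : ang k ((List.range e).map u) = ang k ((List.range e).map j2) := ang_congr hagu
  set i0 : Fin (t*k) := ⟨e * k + (j2 e - 1), coord_lt he (by omega)⟩ with hi0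
  apply lex_falsify hlt i0
  · intro j hj
    have hjv : j.val < e * k + (j2 e - 1) := hj
    have hz : (X j : ℤ) = (Y j : ℤ) := by
      rw [hX, hY]
      rcases Nat.lt_or_ge j.val (e * k) with hblk | hblk
      · have hjk : j.val / k < e := div_lt_of_lt_mul' (by omega) hblk
        rw [vVec_congr_s8 (x := w) (y := j1) j.val (fun r hr => hagw r (by omega)),
            vVec_congr_s8 (x := u) (y := j2) j.val (fun r hr => hagu r (by omega))]
        ring
      · obtain ⟨ρ, hρeq, hρlt⟩ : ∃ ρ, j.val = e * k + ρ ∧ ρ < j2 e - 1 := ⟨j.val - e*k, by omega, by omega⟩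
        rw [hρeq, vVec_at w e ρ (by omega) (by omega), vVec_at j1 e ρ (by omega) (by omega),
          vVec_at j2 e ρ (by omega) (by omega), vVec_at u e ρ (by omega) (by omega),
          if_neg (by omega), if_neg (by omega), if_neg (by omega), if_neg (by omega)]
        ring
    exact_mod_cast hz
  · have hiv : i0.val = e * k + (j2 e - 1) := rfl
    have hXv : (X i0 : ℤ) = a' i0 := by
      rw [hX, hiv, vVec_at w e _ (by omega) (by omega), if_neg (by omega), add_zero]
    have hYv : (Y i0 : ℤ) = a' i0 + (if j2 e = j1 e then ((ang k ((List.range e).map j1) : ℕ) : ℤ) else 0)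
        - (ang k ((List.range e).map j2) : ℕ) := by
      rw [hY, hiv, vVec_at j1 e _ (by omega) (by omega), vVec_at j2 e _ (by omega) (by omega),
        vVec_at u e _ (by omega) (by omega)]
      have hc : (j2 e - 1) + 1 = j2 e := by omega
      rw [hc, if_pos rfl, if_neg (show ¬ j2 e = u e by omega), add_zero]
    have hfin : (Y i0 : ℤ) < (X i0 : ℤ) := by
      rw [hXv, hYv]
      by_cases hcase : j2 e = j1 e
      · -- need c1 < c2, using s0 < e
        have hs0e' : s0 < e := by
          rcases Nat.lt_or_ge s0 e with h | h
          · exact h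
          · exfalso; have : s0 = e := by omega
            subst this; omega
        have hclt : ang k ((List.range e).map j1) < ang k ((List.range e).map j2) :=
          ang_lt hk hs0 (h1v s0 hs0t).1 hs0lt hs0e' (fun r hr => (h1v r (by omega)).2)
            (fun r hr => (h2v r (by omega)).1)
        rw [if_pos hcase]
        have h1 : ((ang k ((List.range e).map j1) : ℕ) : ℤ) < ((ang k ((List.range e).map j2) : ℕ) : ℤ) := by
          exact_mod_cast hclt
        omega
      · rw [if_neg hcase]
        have h2 : (1:ℤ) ≤ ((ang k ((List.range e).map j2) : ℕ) : ℤ) := by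
          exact_mod_cast ang_pos k ((List.range e).map j2)
        omega
    exact_mod_cast hfin

lemma aux_L2 (hk : 1 ≤ k)
    (hwv : validJs t k w) (huv : validJs t k u) (h1v : validJs t k j1) (h2v : validJs t k j2)
    (hX : ∀ x : Fin (t*k), (X x : ℤ) = a' x + vVec k w x.val)
    (hY : ∀ x : Fin (t*k), (Y x : ℤ) = a' x + vVec k j1 x.val - vVec k j2 x.val + vVec k u x.val)
    (he : e < t) (hagw : ∀ r, r < e → w r = j1 r) (hagu : ∀ r, r < e → u r = j2 r)
    (hgtw : j1 e < w e) (hgtu : j2 e < u e)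
    (hlt : lexLt Y X) : ¬ (j1 e < j2 e) := by
  intro hpq
  have hp1 : 1 ≤ j1 e := (h1v e he).1
  have hpk : j1 e ≤ k := (h1v e he).2
  have hwk : w e ≤ k := (hwv e he).2
  have huk : u e ≤ k := (huv e he).2
  set i0 : Fin (t*k) := ⟨e * k + (j1 e - 1), coord_lt he (by omega)⟩ with hi0
  apply lex_falsify hlt i0
  · intro j hj
    have hjv : j.val < e * k + (j1 e - 1) := hj
    have hz : (X j : ℤ) = (Y j : ℤ) := by
      rw [hX, hY]
      rcases Nat.lt_or_ge j.val (e * k) with hblk | hblk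
      · have hjk : j.val / k < e := div_lt_of_lt_mul' (by omega) hblk
        rw [vVec_congr_s8 (x := w) (y := j1) j.val (fun r hr => hagw r (by omega)),
            vVec_congr_s8 (x := u) (y := j2) j.val (fun r hr => hagu r (by omega))]
        ring
      · obtain ⟨ρ, hρeq, hρlt⟩ : ∃ ρ, j.val = e * k + ρ ∧ ρ < j1 e - 1 := ⟨j.val - e*k, by omega, by omega⟩
        rw [hρeq, vVec_at w e ρ (by omega) (by omega), vVec_at j1 e ρ (by omega) (by omega),
          vVec_at j2 e ρ (by omega) (by omega), vVec_at u e ρ (by omega) (by omega),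
          if_neg (by omega), if_neg (by omega), if_neg (by omega), if_neg (by omega)]
        ring
    exact_mod_cast hz.symm
  · have hiv : i0.val = e * k + (j1 e - 1) := rfl
    have hXv : (X i0 : ℤ) = a' i0 := by
      rw [hX, hiv, vVec_at w e _ (by omega) (by omega), if_neg (by omega), add_zero]
    have hYv : (Y i0 : ℤ) = a' i0 + (ang k ((List.range e).map j1) : ℕ) := by
      rw [hY, hiv, vVec_at j1 e _ (by omega) (by omega), vVec_at j2 e _ (by omega) (by omega),
        vVec_at u e _ (by omega) (by omega)]
      have hc : (j1 e - 1) + 1 = j1 e := by omega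
      rw [hc, if_pos rfl, if_neg (show ¬ j1 e = j2 e by omega),
        if_neg (show ¬ j1 e = u e by omega)]
      ring
    have hfin : (X i0 : ℤ) < (Y i0 : ℤ) := by
      rw [hXv, hYv]
      have h2 : (1:ℤ) ≤ ((ang k ((List.range e).map j1) : ℕ) : ℤ) := by
        exact_mod_cast ang_pos k ((List.range e).map j1)
      omega
    exact_mod_cast hfin

end PairLemmas

lemma typeOf_eq {t k : ℕ} {X Y : Fin (t*k) → ℕ} (h : lexLt X Y) :
    typeOf t k X Y = (fdiff h).val / k + 1 := by
  unfold typeOf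
  obtain ⟨h1, h2⟩ := fdiff_spec h
  have hmem : (fdiff h).val / k + 1 ∈ {r | ∃ i : Fin (t*k), i.val / k + 1 = r ∧ X i ≠ Y i} :=
    ⟨fdiff h, rfl, by omega⟩
  refine le_antisymm (Nat.sInf_le hmem) ?_
  obtain ⟨i, hieq, hine⟩ := Nat.sInf_mem (⟨_, hmem⟩ : Set.Nonempty _)
  have hge : (fdiff h).val ≤ i.val := by
    by_contra hc
    push_neg at hc
    exact hine (h1 i hc)
  have := Nat.div_le_div_right (c := k) hge
  omega

lemma fd_block {t k : ℕ} {X Y : Fin (t*k) → ℕ} (h : lexLt X Y) {e : ℕ}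
    (hbelow : ∀ j : Fin (t*k), j.val < e*k → X j = Y j)
    (i1 : Fin (t*k)) (hi1 : i1.val < e*k + k) (hne : X i1 ≠ Y i1) :
    e*k ≤ (fdiff h).val ∧ (fdiff h).val < e*k + k := by
  obtain ⟨h1, h2⟩ := fdiff_spec h
  constructor
  · by_contra hc
    push_neg at hc
    have := hbelow (fdiff h) hc
    omega
  · by_contra hc
    push_neg at hc
    have : X i1 = Y i1 := h1 i1 (by omega)
    exact hne this

lemma blk_eq {e n k : ℕ} (hk : 0 < k) (h1 : e*k ≤ n) (h2 : n < e*k + k) : n / k = e := by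
  refine le_antisymm ?_ ?_
  · have : n < (e+1) * k := by rw [Nat.succ_mul]; omega
    have := (Nat.div_lt_iff_lt_mul hk).mpr this
    omega
  · exact (Nat.le_div_iff_mul_le hk).mpr h1

lemma block_le {e1 e2 n1 n2 k : ℕ} (h1 : e1*k ≤ n1) (h2 : n1 ≤ n2) (h3 : n2 < e2*k + k) :
    e1 ≤ e2 := by
  by_contra h
  push_neg at h
  have hm : (e2+1)*k ≤ e1*k := Nat.mul_le_mul_right k (by omega)
  rw [Nat.succ_mul] at hm
  omega

lemma cols_ne {t k : ℕ} (hk : 1 ≤ k) {base : Fin (t*k) → ℤ} {X L : Fin (t*k) → ℕ}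
    {w z : ℕ → ℕ}
    (hX : ∀ x : Fin (t*k), (X x : ℤ) = base x + vVec k w x.val)
    (hL : ∀ x : Fin (t*k), (L x : ℤ) = base x + vVec k z x.val)
    (hag : ∀ r, r < t → w r = z r) (hlt : lexLt X L) : False := by
  obtain ⟨i, _, hi⟩ := hlt
  have : (X i : ℤ) = (L i : ℤ) := by
    rw [hX, hL, vVec_congr_s8 i.val (fun r hr => hag r (by
      have : i.val / k < t := div_lt_of_lt_mul' (by omega) i.isLt
      omega))]
  omega

lemma cols_fd_block {t k : ℕ} (hk : 1 ≤ k) {base : Fin (t*k) → ℤ} {X L : Fin (t*k) → ℕ}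
    {w z : ℕ → ℕ} (hwv : validJs t k w) (hzv : validJs t k z)
    (hX : ∀ x : Fin (t*k), (X x : ℤ) = base x + vVec k w x.val)
    (hL : ∀ x : Fin (t*k), (L x : ℤ) = base x + vVec k z x.val)
    {e : ℕ} (he : e < t) (hag : ∀ r, r < e → w r = z r) (hne : w e ≠ z e)
    (h : lexLt X L) : e * k ≤ (fdiff h).val ∧ (fdiff h).val < e*k + k := by
  have hw1 : 1 ≤ w e := (hwv e he).1
  have hwk : w e ≤ k := (hwv e he).2
  set i0 : Fin (t*k) := ⟨e * k + (w e - 1), coord_lt he (by omega)⟩ with hi0def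
  have hiv : i0.val = e * k + (w e - 1) := rfl
  refine fd_block h ?_ i0 (by rw [hiv]; omega) ?_
  · intro j hj
    have hjk : j.val / k < e := div_lt_of_lt_mul' (by omega) hj
    have hz : (X j : ℤ) = (L j : ℤ) := by
      rw [hX, hL, vVec_congr_s8 j.val (fun r hr => hag r (by omega))]
    exact_mod_cast hz
  · intro hXL
    have hXv : (X i0 : ℤ) = base i0 + (ang k ((List.range e).map w) : ℕ) := by
      rw [hX, hiv, vVec_at w e _ (by omega) (by omega), if_pos (by omega)]
    have hLv : (L i0 : ℤ) = base i0 + 0 := by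
      rw [hL, hiv, vVec_at z e _ (by omega) (by omega), if_neg (by omega)]
    rw [hXL] at hXv
    have hcast : (1:ℤ) ≤ ((ang k ((List.range e).map w) : ℕ) : ℤ) := by
      exact_mod_cast ang_pos k ((List.range e).map w)
    omega

/-- An occurrence of `P_t` in `A_t` with rows `a < b` and columns
`d 0 < d 1 < ⋯ < d (2t−1)` (0-indexed: `d (2i)` are the odd 1-indexed columns):
if `type(a,b) ≤ type(d 0, d (2t−1))` then both types equal 1. -/
theorem stmt8 (t k : ℕ) (ht : 2 ≤ t) (hk : 2 ≤ k)
    (a b : Fin (t * k) → ℕ) (d : Fin (2 * t) → Fin (t * k) → ℕ)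
    (ha : memI t k a) (hb : memI t k b) (hd : ∀ i, memI t k (d i))
    (hab : lexLt a b)
    (hmono : ∀ i j : Fin (2 * t), i < j → lexLt (d i) (d j))
    (h1 : ∀ i : ℕ, ∀ h : i < t, AtOne t k a (d ⟨2 * i, by omega⟩))
    (h2 : ∀ i : ℕ, ∀ h : i < t - 1, AtOne t k b (d ⟨2 * i + 1, by omega⟩))
    (h3 : AtOne t k a (d ⟨2 * t - 1, by omega⟩))
    (h4 : AtOne t k b (d ⟨2 * t - 1, by omega⟩))
    (hty : typeOf t k a b ≤ typeOf t k (d ⟨0, by omega⟩) (d ⟨2 * t - 1, by omega⟩)) :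
    typeOf t k a b = 1 ∧ typeOf t k (d ⟨0, by omega⟩) (d ⟨2 * t - 1, by omega⟩) = 1 := by
  have hk1 : 1 ≤ k := by omega
  have c0 : (0:ℕ) < 2*t := by omega
  have cL : 2*t-1 < 2*t := by omega
  obtain ⟨j1, hj1v, hj1e⟩ := h3
  obtain ⟨j2, hj2v, hj2e⟩ := h4
  have hltd : ∀ (m1 m2 : ℕ) (hm1 : m1 < 2*t) (hm2 : m2 < 2*t), m1 < m2 →
      lexLt (d ⟨m1, hm1⟩) (d ⟨m2, hm2⟩) :=
    fun _ _ _ _ h => hmono _ _ (Fin.mk_lt_mk.mpr h)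
  -- decompositions
  have hDL1 : ∀ x : Fin (t*k),
      ((d ⟨2*t-1, cL⟩ : Fin (t*k) → ℕ) x : ℤ) = (a x : ℤ) + vVec k j1 x.val := by
    intro x; have := hj1e x; linarith
  have hDL2 : ∀ x : Fin (t*k),
      ((d ⟨2*t-1, cL⟩ : Fin (t*k) → ℕ) x : ℤ) = (b x : ℤ) + vVec k j2 x.val := by
    intro x; have := hj2e x; linarith
  have hbx : ∀ x : Fin (t*k),
      (b x : ℤ) = (a x : ℤ) + vVec k j1 x.val - vVec k j2 x.val := by
    intro x; have h1' := hj1e x; have h2' := hj2e x; linarith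
  -- witness functions
  obtain ⟨W, hW⟩ : ∃ W : ℕ → ℕ → ℕ, ∀ i, ∀ hi : i < t, validJs t k (W i) ∧
      ∀ x : Fin (t*k), ((d ⟨2*i, by omega⟩ : Fin (t*k) → ℕ) x : ℤ)
        = (a x : ℤ) + vVec k (W i) x.val := by
    choose w hw1 hw2 using h1
    refine ⟨fun i => if h : i < t then w i h else j1, fun i hi => ?_⟩
    simp only [dif_pos hi]
    exact ⟨hw1 i hi, fun x => by have := hw2 i hi x; linarith⟩
  obtain ⟨U, hU⟩ : ∃ U : ℕ → ℕ → ℕ, ∀ i, ∀ hi : i < t - 1, validJs t k (U i) ∧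
      ∀ x : Fin (t*k), ((d ⟨2*i+1, by omega⟩ : Fin (t*k) → ℕ) x : ℤ)
        = (b x : ℤ) + vVec k (U i) x.val := by
    choose u hu1 hu2 using h2
    refine ⟨fun i => if h : i < t - 1 then u i h else j2, fun i hi => ?_⟩
    simp only [dif_pos hi]
    exact ⟨hu1 i hi, fun x => by have := hu2 i hi x; linarith⟩
  -- first disagreement of j1 and j2
  have hs0ex : ∃ e, e < t ∧ j1 e ≠ j2 e := by
    by_contra hc
    push_neg at hc
    exact cols_ne (base := fun x => (a x : ℤ) - vVec k j2 x.val) hk1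
      (fun x => by show (a x : ℤ) = (a x : ℤ) - vVec k j2 x.val + vVec k j2 x.val; ring)
      (fun x => by
        show (b x : ℤ) = (a x : ℤ) - vVec k j2 x.val + vVec k j1 x.val
        have := hbx x; linarith)
      (fun r hr => (hc r hr).symm) hab
  have hs0mem : sInf {e | e < t ∧ j1 e ≠ j2 e} < t ∧
      j1 (sInf {e | e < t ∧ j1 e ≠ j2 e}) ≠ j2 (sInf {e | e < t ∧ j1 e ≠ j2 e}) :=
    Nat.sInf_mem hs0ex
  set s0 := sInf {e | e < t ∧ j1 e ≠ j2 e} with hs0def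
  have hs0min : ∀ r, r < s0 → j1 r = j2 r := by
    intro r hr
    by_contra hne
    have : s0 ≤ r := Nat.sInf_le ⟨by omega, hne⟩
    omega
  have hs0lt : j1 s0 < j2 s0 :=
    aux_gt (base := fun x => (a x : ℤ) - vVec k j2 x.val) hk1 hj2v hj1v
      (fun x => by show (a x : ℤ) = (a x : ℤ) - vVec k j2 x.val + vVec k j2 x.val; ring)
      (fun x => by
        show (b x : ℤ) = (a x : ℤ) - vVec k j2 x.val + vVec k j1 x.val
        have := hbx x; linarith)
      hs0mem.1 (fun r hr => (hs0min r hr).symm) (Ne.symm hs0mem.2) hab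
  -- α and β
  have hαex : ∀ i, i < t → ∃ e, e < t ∧ W i e ≠ j1 e := by
    intro i hi
    by_contra hc
    push_neg at hc
    exact cols_ne (base := fun x => (a x : ℤ)) hk1 (hW i hi).2 hDL1 hc
      (hltd (2*i) (2*t-1) (by omega) cL (by omega))
  have hβex : ∀ i, i < t - 1 → ∃ e, e < t ∧ U i e ≠ j2 e := by
    intro i hi
    by_contra hc
    push_neg at hc
    exact cols_ne (base := fun x => (b x : ℤ)) hk1 (hU i hi).2 hDL2 hc
      (hltd (2*i+1) (2*t-1) (by omega) cL (by omega))
  set αf : ℕ → ℕ := fun i => sInf {e | e < t ∧ W i e ≠ j1 e} with hαdef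
  set βf : ℕ → ℕ := fun i => sInf {e | e < t ∧ U i e ≠ j2 e} with hβdef
  have hαmem : ∀ i, i < t → αf i < t ∧ W i (αf i) ≠ j1 (αf i) :=
    fun i hi => Nat.sInf_mem (hαex i hi)
  have hβmem : ∀ i, i < t - 1 → βf i < t ∧ U i (βf i) ≠ j2 (βf i) :=
    fun i hi => Nat.sInf_mem (hβex i hi)
  have hαmin : ∀ i, i < t → ∀ r, r < αf i → W i r = j1 r := by
    intro i hi r hr
    by_contra hne
    have h1' : αf i < t := (hαmem i hi).1
    have : αf i ≤ r := Nat.sInf_le ⟨by omega, hne⟩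
    omega
  have hβmin : ∀ i, i < t - 1 → ∀ r, r < βf i → U i r = j2 r := by
    intro i hi r hr
    by_contra hne
    have h1' : βf i < t := (hβmem i hi).1
    have : βf i ≤ r := Nat.sInf_le ⟨by omega, hne⟩
    omega
  have hgtA : ∀ i, ∀ hi : i < t, j1 (αf i) < W i (αf i) := fun i hi =>
    aux_gt (base := fun x => (a x : ℤ)) hk1 (hW i hi).1 hj1v (hW i hi).2 hDL1
      (hαmem i hi).1 (hαmin i hi) (hαmem i hi).2
      (hltd (2*i) (2*t-1) (by omega) cL (by omega))
  have hgtB : ∀ i, ∀ hi : i < t - 1, j2 (βf i) < U i (βf i) := fun i hi =>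
    aux_gt (base := fun x => (b x : ℤ)) hk1 (hU i hi).1 hj2v (hU i hi).2 hDL2
      (hβmem i hi).1 (hβmin i hi) (hβmem i hi).2
      (hltd (2*i+1) (2*t-1) (by omega) cL (by omega))
  -- the chain step
  have hstep : ∀ i, i < t - 1 →
      αf i ≤ αf (i+1) ∧ (s0 ≤ αf i → αf i < αf (i+1)) := by
    intro i hi
    have hit : i < t := by omega
    have hi1t : i + 1 < t := by omega
    have lAB : lexLt (d ⟨2*i, by omega⟩) (d ⟨2*i+1, by omega⟩) :=
      hltd (2*i) (2*i+1) (by omega) (by omega) (by omega)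
    have lBA : lexLt (d ⟨2*i+1, by omega⟩) (d ⟨2*(i+1), by omega⟩) :=
      hltd (2*i+1) (2*(i+1)) (by omega) (by omega) (by omega)
    have lAL : lexLt (d ⟨2*i, by omega⟩) (d ⟨2*t-1, cL⟩) :=
      hltd (2*i) (2*t-1) (by omega) cL (by omega)
    have lBL : lexLt (d ⟨2*i+1, by omega⟩) (d ⟨2*t-1, cL⟩) :=
      hltd (2*i+1) (2*t-1) (by omega) cL (by omega)
    have lA'L : lexLt (d ⟨2*(i+1), by omega⟩) (d ⟨2*t-1, cL⟩) :=
      hltd (2*(i+1)) (2*t-1) (by omega) cL (by omega)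
    have bndA := cols_fd_block (base := fun x => (a x : ℤ)) hk1 (hW i hit).1 hj1v
      (hW i hit).2 hDL1 (hαmem i hit).1 (hαmin i hit) (hαmem i hit).2 lAL
    have bndB := cols_fd_block (base := fun x => (b x : ℤ)) hk1 (hU i hi).1 hj2v
      (hU i hi).2 hDL2 (hβmem i hi).1 (hβmin i hi) (hβmem i hi).2 lBL
    have bndA' := cols_fd_block (base := fun x => (a x : ℤ)) hk1 (hW (i+1) hi1t).1 hj1v
      (hW (i+1) hi1t).2 hDL1 (hαmem (i+1) hi1t).1 (hαmin (i+1) hi1t) (hαmem (i+1) hi1t).2 lA'L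
    have m1 := fd_mono lAB lBL lAL
    have m2 := fd_mono lBA lA'L lBL
    have i1 : αf i ≤ βf i := block_le bndA.1 m1 bndB.2
    have i2 : βf i ≤ αf (i+1) := block_le bndB.1 m2 bndA'.2
    refine ⟨by omega, ?_⟩
    intro hs0αi
    by_contra hcon
    push_neg at hcon
    have he1 : βf i = αf i := by omega
    have he2 : αf (i+1) = αf i := by omega
    have hY : ∀ x : Fin (t*k), ((d ⟨2*i+1, by omega⟩ : Fin (t*k) → ℕ) x : ℤ)
        = (a x : ℤ) + vVec k j1 x.val - vVec k j2 x.val + vVec k (U i) x.val := by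
      intro x
      have h1' := (hU i hi).2 x
      have h2' := hbx x
      linarith
    have hagu : ∀ r, r < αf i → U i r = j2 r := fun r hr =>
      hβmin i hi r (by omega)
    have hgtu : j2 (αf i) < U i (αf i) := by
      rw [← he1]; exact hgtB i hi
    have hL1 : j1 (αf i) < j2 (αf i) :=
      aux_L1 (a' := fun x => (a x : ℤ)) hk1 (hW i hit).1 (hU i hi).1 hj1v hj2v
        (hW i hit).2 hY hs0mem.1 hs0min hs0lt hs0αi (hαmem i hit).1
        (hαmin i hit) hagu (hgtA i hit) hgtu lAB
    have hagw' : ∀ r, r < αf i → W (i+1) r = j1 r := fun r hr =>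
      hαmin (i+1) hi1t r (by omega)
    have hgtw' : j1 (αf i) < W (i+1) (αf i) := by
      rw [← he2]; exact hgtA (i+1) hi1t
    have hL2 : ¬ (j1 (αf i) < j2 (αf i)) :=
      aux_L2 (a' := fun x => (a x : ℤ)) hk1 (hW (i+1) hi1t).1 (hU i hi).1 hj1v hj2v
        (hW (i+1) hi1t).2 hY (hαmem i hit).1 hagw' hagu hgtw' hgtu lBA
    exact hL2 hL1
  -- typeOf computations
  have lab := hab
  have bndab := cols_fd_block (base := fun x => (a x : ℤ) - vVec k j2 x.val) hk1 hj2v hj1v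
    (fun x => by show (a x : ℤ) = (a x : ℤ) - vVec k j2 x.val + vVec k j2 x.val; ring)
    (fun x => by
      show (b x : ℤ) = (a x : ℤ) - vVec k j2 x.val + vVec k j1 x.val
      have := hbx x; linarith)
    hs0mem.1 (fun r hr => (hs0min r hr).symm) (Ne.symm hs0mem.2) lab
  have t1 : typeOf t k a b = s0 + 1 := by
    rw [typeOf_eq lab, blk_eq (by omega) bndab.1 bndab.2]
  have h0t : (0:ℕ) < t := by omega
  have l0L : lexLt (d ⟨0, c0⟩) (d ⟨2*t-1, cL⟩) := hltd 0 (2*t-1) c0 cL (by omega)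
  have bnd0 := cols_fd_block (base := fun x => (a x : ℤ)) hk1 (hW 0 h0t).1 hj1v
    (hW 0 h0t).2 hDL1 (hαmem 0 h0t).1 (hαmin 0 h0t) (hαmem 0 h0t).2 l0L
  have t2 : typeOf t k (d ⟨0, c0⟩) (d ⟨2*t-1, cL⟩) = αf 0 + 1 := by
    rw [typeOf_eq l0L, blk_eq (by omega) bnd0.1 bnd0.2]
  have hty' : typeOf t k a b ≤ typeOf t k (d ⟨0, c0⟩) (d ⟨2*t-1, cL⟩) := hty
  have hs0α0 : s0 ≤ αf 0 := by omega
  -- chain inductions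
  have hle : ∀ i, i < t → αf 0 ≤ αf i := by
    intro i
    induction i with
    | zero => intro _; exact le_rfl
    | succ n ih =>
      intro h
      exact le_trans (ih (by omega)) (hstep n (by omega)).1
  have hgrow : ∀ i, i < t → αf 0 + i ≤ αf i := by
    intro i
    induction i with
    | zero => intro _; omega
    | succ n ih =>
      intro h
      have h1' := ih (by omega)
      have h2' := (hstep n (by omega)).2 (le_trans hs0α0 (hle n (by omega)))
      omega
  have hfin := hgrow (t-1) (by omega)
  have hfin2 : αf (t-1) < t := (hαmem (t-1) (by omega)).1
  have hα00 : αf 0 = 0 := by omega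
  show typeOf t k a b = 1 ∧ typeOf t k (d ⟨0, c0⟩) (d ⟨2*t-1, cL⟩) = 1
  omega
end

section
/- Let r_1 < r_2 < r_3 < r_4 and s_1 < s_2 in I (lexicographic order), and suppose A_t(r_1, s_1) = A_t(r_1, s_2) = A_t(r_2, s_2) = A_t(r_3, s_1) = A_t(r_4, s_2) = 1. If type(s_1, s_2) ≤ type(r_1, r_4), then type(r_1, r_4) < type(r_1, r_2). -/
section Aux

lemma mulk_add_inj {k A B r s : ℕ} (hk : 0 < k) (hr : r < k) (hs : s < k)
    (h : k * A + r = k * B + s) : A = B ∧ r = s := by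
  constructor
  · have h1 := congrArg (· / k) h
    simpa [Nat.mul_add_div hk, Nat.div_eq_of_lt hr, Nat.div_eq_of_lt hs] using h1
  · have h1 := congrArg (· % k) h
    simpa [Nat.mul_add_mod, Nat.mod_eq_of_lt hr, Nat.mod_eq_of_lt hs] using h1

lemma angCore_inj (k : ℕ) (hk : 1 ≤ k) (l₁ : List ℕ) :
    ∀ (l₂ : List ℕ), l₁.length = l₂.length →
      (∀ x ∈ l₁, 1 ≤ x ∧ x ≤ k) → (∀ x ∈ l₂, 1 ≤ x ∧ x ≤ k) →
      List.foldl (fun acc j => acc * k + (j - 1)) 0 l₁ =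
        List.foldl (fun acc j => acc * k + (j - 1)) 0 l₂ → l₁ = l₂ := by
  induction l₁ using List.reverseRecOn with
  | nil =>
    intro l₂ hlen _ _ _
    exact (List.eq_nil_of_length_eq_zero hlen.symm).symm
  | append_singleton l x ih =>
    intro l₂ hlen hv1 hv2 heq
    rcases List.eq_nil_or_concat l₂ with rfl | ⟨l', y, rfl⟩
    · simp at hlen
    · simp only [List.concat_eq_append, List.foldl_append, List.foldl_cons, List.foldl_nil] at heq
      have hx : 1 ≤ x ∧ x ≤ k := hv1 x (by simp)
      have hy : 1 ≤ y ∧ y ≤ k := hv2 y (by simp)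
      rw [Nat.mul_comm _ k, Nat.mul_comm _ k] at heq
      obtain ⟨hAB, hrs⟩ := mulk_add_inj hk (by omega) (by omega) heq
      have hll : l = l' := ih l' (by simp [List.concat_eq_append] at hlen; omega)
        (fun z hz => hv1 z (by simp [hz])) (fun z hz => hv2 z (by simp [List.concat_eq_append, hz])) hAB
      have hxy : x = y := by omega
      simp [List.concat_eq_append, hll, hxy]

lemma ang_inj (k : ℕ) (hk : 1 ≤ k) (l₁ l₂ : List ℕ) (hlen : l₁.length = l₂.length)
    (hv1 : ∀ x ∈ l₁, 1 ≤ x ∧ x ≤ k) (hv2 : ∀ x ∈ l₂, 1 ≤ x ∧ x ≤ k)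
    (h : ang k l₁ = ang k l₂) : l₁ = l₂ :=
  angCore_inj k hk l₁ l₂ hlen hv1 hv2 (by unfold ang at h; omega)

lemma ang_congr_s11 (k d : ℕ) (β γ : ℕ → ℕ) (h : ∀ j < d, β j = γ j) :
    ang k ((List.range d).map β) = ang k ((List.range d).map γ) := by
  congr 1
  exact List.map_congr_left fun a ha => h a (List.mem_range.mp ha)

lemma vVec_congr_s11 (k : ℕ) (β γ : ℕ → ℕ) (d i : ℕ) (h : ∀ j < d, β j = γ j)
    (hi : i / k < d) : vVec k β i = vVec k γ i := by
  unfold vVec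
  rw [h _ hi, show (List.range (i / k)).map β = (List.range (i / k)).map γ from
    List.map_congr_left fun a ha => h a (lt_trans (List.mem_range.mp ha) hi)]

lemma P_divmod (k d c : ℕ) (hk : 0 < k) (h1 : 1 ≤ c) (hck : c ≤ k) :
    (k * d + (c - 1)) / k = d ∧ (k * d + (c - 1)) % k = c - 1 := by
  constructor
  · rw [Nat.mul_add_div hk, Nat.div_eq_of_lt (by omega)]
    omega
  · rw [Nat.mul_add_mod, Nat.mod_eq_of_lt (by omega)]

lemma vVec_self (k : ℕ) (β : ℕ → ℕ) (d : ℕ) (hk : 0 < k) (h1 : 1 ≤ β d) (hbk : β d ≤ k) :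
    vVec k β (k * d + (β d - 1)) = (ang k ((List.range d).map β) : ℤ) := by
  obtain ⟨hd, hm⟩ := P_divmod k d (β d) hk h1 hbk
  unfold vVec
  rw [hd, hm, if_pos (by omega)]

lemma vVec_other (k : ℕ) (γ : ℕ → ℕ) (d c : ℕ) (hk : 0 < k) (h1 : 1 ≤ c) (hck : c ≤ k)
    (hne : c ≠ γ d) : vVec k γ (k * d + (c - 1)) = 0 := by
  obtain ⟨hd, hm⟩ := P_divmod k d c hk h1 hck
  unfold vVec
  rw [hd, hm, if_neg (by omega)]

lemma P_lt (t k d c : ℕ) (hd : d < t) (h1 : 1 ≤ c) (hck : c ≤ k) :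
    k * d + (c - 1) < t * k := by
  have h2 : k * (d + 1) ≤ k * t := Nat.mul_le_mul_left k hd
  have e : k * (d + 1) = k * d + k := by ring
  have e2 : k * t = t * k := Nat.mul_comm k t
  omega

/-- Below the first difference position, `vVec β` and `vVec γ` agree. -/

lemma diff_below (k : ℕ) (hk : 0 < k) (β γ : ℕ → ℕ) (d : ℕ)
    (hagree : ∀ j < d, β j = γ j) (h1 : 1 ≤ β d) (hbk : β d ≤ k) (hlt : β d < γ d) :
    ∀ i < k * d + (β d - 1), vVec k β i = vVec k γ i := by
  intro i hi
  rcases lt_or_ge (i / k) d with h | h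
  · exact vVec_congr_s11 k β γ d i hagree h
  · have hd : i / k = d := by
      have h2 : i / k < d + 1 := by
        rw [Nat.div_lt_iff_lt_mul hk, Nat.add_mul]
        have e : k * d = d * k := Nat.mul_comm k d
        omega
      omega
    have him := Nat.mod_add_div i k
    rw [hd] at him
    unfold vVec
    rw [hd, if_neg (by omega), if_neg (by omega)]

lemma lexLt_trans {N : ℕ} {a b c : Fin N → ℕ} (h1 : lexLt a b) (h2 : lexLt b c) :
    lexLt a c := by
  obtain ⟨i, hi, hi'⟩ := h1
  obtain ⟨j, hj, hj'⟩ := h2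
  rcases lt_trichotomy i j with h | h | h
  · exact ⟨i, fun m hm => (hi m hm).trans (hj m (hm.trans h)), hi'.trans_le (le_of_eq (hj i h))⟩
  · subst h
    exact ⟨i, fun m hm => (hi m hm).trans (hj m hm), hi'.trans hj'⟩
  · exact ⟨j, fun m hm => (hi m (hm.trans h)).trans (hj m hm), lt_of_le_of_lt (le_of_eq (hi j h)) hj'⟩

lemma sandwich {N : ℕ} {a x b : Fin N → ℕ} (h1 : lexLt a x) (h2 : lexLt x b) (P : ℕ)
    (hab : ∀ j : Fin N, j.val ≤ P → a j = b j) : ∀ j : Fin N, j.val ≤ P → x j = a j := by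
  obtain ⟨i₂, hpre₂, hlt₂⟩ := h1
  obtain ⟨i₃, hpre₃, hlt₃⟩ := h2
  have hP : P < i₂.val := by
    by_contra hc
    push_neg at hc
    rcases lt_trichotomy i₂ i₃ with h | h | h
    · have e1 := hpre₃ i₂ h
      have e2 := hab i₂ hc
      omega
    · subst h
      have e2 := hab i₂ hc
      omega
    · have e1 := hpre₂ i₃ h
      have e2 := hab i₃ (le_trans (le_of_lt h) hc)
      omega
  intro j hj
  exact (hpre₂ j (by exact lt_of_le_of_lt hj hP : j.val < i₂.val)).symm

/-- Existence of a first differing index, and its sign, from a lexicographic comparison. -/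

lemma sign_lemma (t k : ℕ) (hk : 0 < k) (β γ : ℕ → ℕ)
    (hβ : validJs t k β) (hγ : validJs t k γ) (a b : Fin (t * k) → ℕ)
    (hab : ∀ i : Fin (t * k), (b i : ℤ) - a i = vVec k β i.val - vVec k γ i.val)
    (hlex : lexLt a b) :
    ∃ hne : ∃ j, j < t ∧ β j ≠ γ j, β (Nat.find hne) < γ (Nat.find hne) := by
  have hne : ∃ j, j < t ∧ β j ≠ γ j := by
    by_contra hc
    push_neg at hc
    obtain ⟨i, _, hi⟩ := hlex
    have hv : vVec k β i.val = vVec k γ i.val := by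
      apply vVec_congr_s11 k β γ t i.val (fun j hj => hc j hj)
      rw [Nat.div_lt_iff_lt_mul hk]
      exact i.isLt
    have := hab i
    omega
  refine ⟨hne, ?_⟩
  set d := Nat.find hne with hdd
  obtain ⟨hdt, hdne⟩ : d < t ∧ β d ≠ γ d := Nat.find_spec hne
  have hagree : ∀ j < d, β j = γ j := by
    intro j hj
    have := Nat.find_min hne hj
    push_neg at this
    exact this (hj.trans hdt)
  rcases lt_or_gt_of_ne hdne with h | h
  · exact h
  exfalso
  -- γ d < β d : contradiction with lexLt a b
  have hγd := hγ d hdt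
  have hβd := hβ d hdt
  set P := k * d + (γ d - 1) with hPdef
  have hPlt : P < t * k := P_lt t k d (γ d) hdt hγd.1 hγd.2
  have hbelow := diff_below k hk γ β d (fun j hj => (hagree j hj).symm) hγd.1 hγd.2 h
  have hatP1 : vVec k γ P = (ang k ((List.range d).map γ) : ℤ) :=
    vVec_self k γ d hk hγd.1 hγd.2
  have hatP2 : vVec k β P = 0 :=
    vVec_other k β d (γ d) hk hγd.1 hγd.2 (by omega)
  have hcpos : 1 ≤ ang k ((List.range d).map γ) := ang_pos _ _
  obtain ⟨i, hpre, hilt⟩ := hlex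
  set iP : Fin (t * k) := ⟨P, hPlt⟩ with hiP
  rcases lt_trichotomy i.val P with hc | hc | hc
  · have hv := hbelow i.val hc
    have := hab i
    omega
  · have hv := hab iP
    have hieq : i = iP := Fin.ext hc
    rw [hieq] at hilt
    rw [hatP1, hatP2] at hv
    omega
  · have he := hpre iP (by exact hc : iP.val < i.val)
    have hv := hab iP
    rw [hatP1, hatP2] at hv
    omega

lemma type_lemma (t k : ℕ) (hk : 0 < k) (β γ : ℕ → ℕ)
    (hβ : validJs t k β) (hγ : validJs t k γ) (a b : Fin (t * k) → ℕ)
    (hab : ∀ i : Fin (t * k), (b i : ℤ) - a i = vVec k β i.val - vVec k γ i.val)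
    (hne : ∃ j, j < t ∧ β j ≠ γ j) :
    typeOf t k a b = Nat.find hne + 1 := by
  set d := Nat.find hne with hdd
  obtain ⟨hdt, hdne⟩ : d < t ∧ β d ≠ γ d := Nat.find_spec hne
  have hagree : ∀ j < d, β j = γ j := by
    intro j hj
    have := Nat.find_min hne hj
    push_neg at this
    exact this (hj.trans hdt)
  have hβd := hβ d hdt
  set P := k * d + (β d - 1) with hPdef
  have hPlt : P < t * k := P_lt t k d (β d) hdt hβd.1 hβd.2
  set iP : Fin (t * k) := ⟨P, hPlt⟩ with hiP
  have hatP1 : vVec k β P = (ang k ((List.range d).map β) : ℤ) :=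
    vVec_self k β d hk hβd.1 hβd.2
  have hatP2 : vVec k γ P = 0 :=
    vVec_other k γ d (β d) hk hβd.1 hβd.2 hdne
  have hcpos : 1 ≤ ang k ((List.range d).map β) := ang_pos _ _
  have hPd : P / k = d := (P_divmod k d (β d) hk hβd.1 hβd.2).1
  have hmem : d + 1 ∈ {r | ∃ i : Fin (t * k), i.val / k + 1 = r ∧ a i ≠ b i} := by
    refine ⟨iP, by simp [hiP, hPd], ?_⟩
    have hv := hab iP
    rw [hatP1, hatP2] at hv
    intro hcon
    rw [hcon] at hv
    omega
  apply le_antisymm (Nat.sInf_le hmem)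
  apply le_csInf ⟨_, hmem⟩
  rintro r ⟨i, hir, hiab⟩
  by_contra hc
  push_neg at hc
  have hid : i.val / k < d := by omega
  have hv := vVec_congr_s11 k β γ d i.val hagree hid
  have := hab i
  have : (b i : ℤ) = a i := by omega
  exact hiab (by exact_mod_cast this.symm)

lemma find_agree {t : ℕ} {β γ : ℕ → ℕ} (hne : ∃ j, j < t ∧ β j ≠ γ j) :
    ∀ j < Nat.find hne, β j = γ j := by
  intro j hj
  have h := Nat.find_min hne hj
  push_neg at h
  exact h (hj.trans (Nat.find_spec hne).1)

end Aux

/-- If `r₁ < r₂ < r₃ < r₄`, `s₁ < s₂`,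
`A_t(r₁,s₁) = A_t(r₁,s₂) = A_t(r₂,s₂) = A_t(r₃,s₁) = A_t(r₄,s₂) = 1`, and
`type(s₁,s₂) ≤ type(r₁,r₄)`, then `type(r₁,r₄) < type(r₁,r₂)`. -/
theorem stmt11 (t k : ℕ) (ht : 2 ≤ t) (hk : 2 ≤ k)
    (r₁ r₂ r₃ r₄ s₁ s₂ : Fin (t * k) → ℕ)
    (h1 : memI t k r₁) (h2 : memI t k r₂) (h3 : memI t k r₃) (h4 : memI t k r₄)
    (hs1 : memI t k s₁) (hs2 : memI t k s₂)
    (h12 : lexLt r₁ r₂) (h23 : lexLt r₂ r₃) (h34 : lexLt r₃ r₄) (hs12 : lexLt s₁ s₂)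
    (e1 : AtOne t k r₁ s₁) (e2 : AtOne t k r₁ s₂) (e3 : AtOne t k r₂ s₂)
    (e4 : AtOne t k r₃ s₁) (e5 : AtOne t k r₄ s₂)
    (hty : typeOf t k s₁ s₂ ≤ typeOf t k r₁ r₄) :
    typeOf t k r₁ r₄ < typeOf t k r₁ r₂ := by
  obtain ⟨α, hαv, hα⟩ := e1
  obtain ⟨β, hβv, hβ⟩ := e2
  obtain ⟨γ, hγv, hγ⟩ := e3
  obtain ⟨δ, hδv, hδ⟩ := e4
  obtain ⟨ε, hεv, hε⟩ := e5
  have hk0 : 0 < k := by omega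
  have hk1 : 1 ≤ k := by omega
  -- pointwise difference identities
  have hβα : ∀ i : Fin (t * k), (s₂ i : ℤ) - s₁ i = vVec k β i.val - vVec k α i.val := by
    intro i; have := hα i; have := hβ i; omega
  have hβγ : ∀ i : Fin (t * k), (r₂ i : ℤ) - r₁ i = vVec k β i.val - vVec k γ i.val := by
    intro i; have := hβ i; have := hγ i; omega
  have hβε : ∀ i : Fin (t * k), (r₄ i : ℤ) - r₁ i = vVec k β i.val - vVec k ε i.val := by
    intro i; have := hβ i; have := hε i; omega
  have hγε : ∀ i : Fin (t * k), (r₄ i : ℤ) - r₂ i = vVec k γ i.val - vVec k ε i.val := by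
    intro i; have := hγ i; have := hε i; omega
  have hαδ : ∀ i : Fin (t * k), (r₃ i : ℤ) - r₁ i = vVec k α i.val - vVec k δ i.val := by
    intro i; have := hα i; have := hδ i; omega
  -- lex facts
  have h13 : lexLt r₁ r₃ := lexLt_trans h12 h23
  have h24 : lexLt r₂ r₄ := lexLt_trans h23 h34
  have h14 : lexLt r₁ r₄ := lexLt_trans h13 h34
  -- first differences and signs
  obtain ⟨hneβα, hsβα⟩ := sign_lemma t k hk0 β α hβv hαv s₁ s₂ hβα hs12
  obtain ⟨hneβγ, hsβγ⟩ := sign_lemma t k hk0 β γ hβv hγv r₁ r₂ hβγ h12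
  obtain ⟨hneβε, hsβε⟩ := sign_lemma t k hk0 β ε hβv hεv r₁ r₄ hβε h14
  obtain ⟨hneγε, hsγε⟩ := sign_lemma t k hk0 γ ε hγv hεv r₂ r₄ hγε h24
  obtain ⟨hneαδ, hsαδ⟩ := sign_lemma t k hk0 α δ hαv hδv r₁ r₃ hαδ h13
  set m := Nat.find hneβα with hm
  set p := Nat.find hneβγ with hp
  set q := Nat.find hneβε with hq
  set u := Nat.find hneγε with hu
  set w := Nat.find hneαδ with hw
  have hmS := Nat.find_spec hneβα
  have hpS := Nat.find_spec hneβγ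
  have hqS := Nat.find_spec hneβε
  have huS := Nat.find_spec hneγε
  have hwS := Nat.find_spec hneαδ
  have agβα := find_agree hneβα
  have agβγ := find_agree hneβγ
  have agβε := find_agree hneβε
  have agγε := find_agree hneγε
  have agαδ := find_agree hneαδ
  rw [type_lemma t k hk0 β α hβv hαv s₁ s₂ hβα hneβα,
      type_lemma t k hk0 β ε hβv hεv r₁ r₄ hβε hneβε] at hty
  rw [type_lemma t k hk0 β ε hβv hεv r₁ r₄ hβε hneβε,
      type_lemma t k hk0 β γ hβv hγv r₁ r₂ hβγ hneβγ]
  -- goal : q + 1 < p + 1 ; hty : m + 1 ≤ q + 1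
  by_contra hcon
  push_neg at hcon
  have hpq : p ≤ q := by omega
  rcases eq_or_lt_of_le hpq with heq | hlt
  · -- p = q : the sandwich argument
    have hβp := hβv p hpS.1
    have hεne : β p ≠ ε p := by rw [heq]; exact hqS.2
    have hεgt : β p < ε p := by rw [heq]; exact hsβε
    have agβε' : ∀ j < p, β j = ε j := by intro j hj; exact agβε j (by omega)
    set P := k * p + (β p - 1) with hPdef
    have hPlt : P < t * k := P_lt t k p (β p) hpS.1 hβp.1 hβp.2
    have hbel1 := diff_below k hk0 β γ p agβγ hβp.1 hβp.2 hsβγ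
    have hbel2 := diff_below k hk0 β ε p agβε' hβp.1 hβp.2 hεgt
    have hatβ := vVec_self k β p hk0 hβp.1 hβp.2
    have hatγ := vVec_other k γ p (β p) hk0 hβp.1 hβp.2 hpS.2
    have hatε := vVec_other k ε p (β p) hk0 hβp.1 hβp.2 hεne
    have hc0pos : 1 ≤ ang k ((List.range p).map β) := ang_pos _ _
    have h24eq : ∀ j : Fin (t * k), j.val ≤ P → r₂ j = r₄ j := by
      intro j hj
      have e2 := hβγ j
      have e4 := hβε j
      rcases eq_or_lt_of_le hj with he | hl
      · rw [he] at e2 e4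
        rw [hatγ] at e2
        rw [hatε] at e4
        omega
      · have g1 := hbel1 j.val hl
        have g2 := hbel2 j.val hl
        omega
    have hsand := sandwich h23 h34 P h24eq
    -- the (α, δ) pair
    have hαw := hαv w hwS.1
    set W := k * w + (α w - 1) with hWdef
    have hWlt : W < t * k := P_lt t k w (α w) hwS.1 hαw.1 hαw.2
    have hbel3 := diff_below k hk0 α δ w agαδ hαw.1 hαw.2 hsαδ
    have hatα := vVec_self k α w hk0 hαw.1 hαw.2
    have hatδ := vVec_other k δ w (α w) hk0 hαw.1 hαw.2 (by omega)
    have hcαpos : 1 ≤ ang k ((List.range w).map α) := ang_pos _ _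
    have hWP : W = P := by
      rcases lt_trichotomy W P with hc | hc | hc
      · exfalso
        have e0 := hsand ⟨W, hWlt⟩ (le_of_lt hc)
        have e1 := hαδ ⟨W, hWlt⟩
        have e2 := hβγ ⟨W, hWlt⟩
        have e3 := hbel1 W hc
        simp only [Fin.val_mk] at e1 e2
        rw [hatα, hatδ] at e1
        omega
      · exact hc
      · exfalso
        have e0 := hsand ⟨P, hPlt⟩ le_rfl
        have e1 := hαδ ⟨P, hPlt⟩
        have e2 := hβγ ⟨P, hPlt⟩
        have e3 := hbel3 P hc
        simp only [Fin.val_mk] at e1 e2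
        rw [hatβ, hatγ] at e2
        omega
    obtain ⟨hwp, hcoord⟩ :=
      mulk_add_inj hk0 (by omega : α w - 1 < k) (by omega : β p - 1 < k) hWP
    have hαβp : α p = β p := by
      have hawp : α w = α p := by rw [hwp]
      omega
    -- ang values are equal
    have hangeq : ang k ((List.range w).map α) = ang k ((List.range p).map β) := by
      have e0 := hsand ⟨P, hPlt⟩ le_rfl
      have e1 := hαδ ⟨P, hPlt⟩
      have e2 := hβγ ⟨P, hPlt⟩
      simp only [Fin.val_mk] at e1 e2
      rw [hatβ, hatγ] at e2
      have hatα' : vVec k α P = (ang k ((List.range w).map α) : ℤ) := by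
        rw [← hWP]; exact hatα
      have hatδ' : vVec k δ P = 0 := by
        rw [← hWP]; exact hatδ
      rw [hatα', hatδ'] at e1
      omega
    rw [hwp] at hangeq
    have hlists : (List.range p).map α = (List.range p).map β := by
      apply ang_inj k hk1 _ _ (by simp)
      · rintro x hx
        simp only [List.mem_map, List.mem_range] at hx
        obtain ⟨j, hj, rfl⟩ := hx
        exact hαv j (by omega)
      · rintro x hx
        simp only [List.mem_map, List.mem_range] at hx
        obtain ⟨j, hj, rfl⟩ := hx
        exact hβv j (by omega)
      · exact hangeq
    have hαβbelow : ∀ j < p, α j = β j := by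
      intro j hj
      exact List.map_inj_left.mp hlists j (List.mem_range.mpr hj)
    -- contradiction with m ≤ q = p
    have hmp : m ≤ p := by omega
    have hmne : β m ≠ α m := hmS.2
    rcases eq_or_lt_of_le hmp with he | hl
    · exact hmne (by rw [he]; exact hαβp.symm)
    · exact hmne (hαβbelow m hl).symm
  · -- p < q
    have hεβp : β p = ε p := agβε p hlt
    have hup : u = p := by
      apply le_antisymm
      · exact Nat.find_min' hneγε ⟨hpS.1, by omega⟩
      · by_contra h'
        push_neg at h'
        have e1 := agβγ u h'
        have e2 := agβε u (by omega)
        exact huS.2 (by omega)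
    rw [hup] at hsγε
    omega
end
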